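/- arXiv:1902.10983 — 6 statements merged into one kernel-verified Lean document; each statement's English description precedes it below -/
import Mathlib

section
/- For every n ≥ 1, the word (x₁x₂)ⁿ (n alternating repetitions of two distinct letters x₁ and x₂) has locality number exactly n. -/
noncomputable section

attribute [local instance] Classical.propDecidable

variable {X : Type*} [DecidableEq X]

/-- Number of maximal blocks of `true`s in a list of booleans, where the first
argument is the preceding symbol. -/
def blocksAux : Bool → List Bool → ℕ
  | _, [] => 0
  | prev, b :: rest => (if b = true ∧ prev = false then 1 else 0) + blocksAux b rest

/-- Number of maximal contiguous blocks of positions of `w` whose letter lies in `S`. -/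
def blockCount (w : List X) (S : List X) : ℕ :=
  blocksAux false (w.map (fun x => decide (x ∈ S)))

/-- `σ` is a marking sequence for `w`: an enumeration, without repetition,
of the alphabet of `w`. -/
def IsMarkingSeq (w σ : List X) : Prop := σ.Nodup ∧ σ.toFinset = w.toFinset

/-- The marking number of the marking sequence `σ` on `w`: the maximum, over all
stages `i`, of the number of maximal contiguous marked blocks after marking the
first `i` letters of `σ`. -/
def markingNumber (w σ : List X) : ℕ :=
  Finset.sup (Finset.range (σ.length + 1)) (fun i => blockCount w (σ.take i))

/-- The locality number of `w`: the minimum marking number over all marking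
sequences for `w`. -/
def locality (w : List X) : ℕ :=
  sInf {n | ∃ σ, IsMarkingSeq w σ ∧ markingNumber w σ = n}

lemma baux_tf : ∀ n, blocksAux false ((List.replicate n [true, false]).flatten) = n
  | 0 => rfl
  | n+1 => by
    simp [List.replicate_succ, blocksAux, baux_tf n]; omega

lemma baux_ft : ∀ (n : ℕ) (p : Bool), blocksAux p ((List.replicate n [false, true]).flatten) = n
  | 0, _ => rfl
  | n+1, p => by
    simp [List.replicate_succ, blocksAux, baux_ft n true]; omega

lemma baux_tt0 : ∀ n, blocksAux true ((List.replicate n [true, true]).flatten) = 0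
  | 0 => rfl
  | n+1 => by
    simp [List.replicate_succ, blocksAux, baux_tt0 n]

lemma baux_tt : ∀ n, blocksAux false ((List.replicate n [true, true]).flatten) ≤ 1
  | 0 => by simp [blocksAux]
  | n+1 => by
    simp [List.replicate_succ, blocksAux, baux_tt0 n]

lemma baux_ff : ∀ n, blocksAux false ((List.replicate n [false, false]).flatten) = 0
  | 0 => rfl
  | n+1 => by
    simp [List.replicate_succ, blocksAux, baux_ff n]

omit [DecidableEq X] in
lemma map_word (x₁ x₂ : X) (n : ℕ) (f : X → Bool) :
    (List.flatten (List.replicate n [x₁, x₂])).map f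
      = (List.replicate n [f x₁, f x₂]).flatten := by
  rw [List.map_flatten, List.map_replicate]
  rfl

/-- For every `n ≥ 1`, the word `(x₁x₂)ⁿ` over two distinct letters has locality
number exactly `n`. -/
theorem locality_alternating (x₁ x₂ : X) (hx : x₁ ≠ x₂) (n : ℕ) (hn : 1 ≤ n) :
    locality (List.flatten (List.replicate n [x₁, x₂])) = n := by
  set w := List.flatten (List.replicate n [x₁, x₂]) with hw
  have hwfin : w.toFinset = {x₁, x₂} := by
    ext a
    simp only [List.mem_toFinset, hw, List.mem_flatten, List.mem_replicate,
      Finset.mem_insert, Finset.mem_singleton]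
    constructor
    · rintro ⟨l, ⟨-, rfl⟩, hl⟩
      simpa using hl
    · rintro h
      exact ⟨[x₁, x₂], ⟨by omega, rfl⟩, by simpa using h⟩
  have hbc1 : blockCount w [x₁] = n := by
    unfold blockCount
    rw [map_word]
    have e1 : decide (x₁ ∈ [x₁]) = true := by simp
    have e2 : decide (x₂ ∈ [x₁]) = false := by simp [hx.symm]
    rw [e1, e2]
    exact baux_tf n
  have hbc2 : blockCount w [x₂] = n := by
    unfold blockCount
    rw [map_word]
    have e1 : decide (x₁ ∈ [x₂]) = false := by simp [hx]
    have e2 : decide (x₂ ∈ [x₂]) = true := by simp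
    rw [e1, e2]
    exact baux_ft n false
  have hbcnil : blockCount w ([] : List X) = 0 := by
    unfold blockCount
    rw [map_word]
    have e1 : decide (x₁ ∈ ([] : List X)) = false := by simp
    have e2 : decide (x₂ ∈ ([] : List X)) = false := by simp
    rw [e1, e2]
    exact baux_ff n
  have hbcfull : ∀ S : List X, x₁ ∈ S → x₂ ∈ S → blockCount w S ≤ 1 := by
    intro S h1 h2
    unfold blockCount
    rw [map_word]
    rw [show (decide (x₁ ∈ S)) = true by simpa using h1,
      show (decide (x₂ ∈ S)) = true by simpa using h2]
    exact baux_tt n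
  have hge : ∀ σ, IsMarkingSeq w σ → n ≤ markingNumber w σ := by
    intro σ ⟨hnd, hfin⟩
    rw [hwfin] at hfin
    have hne : σ ≠ [] := by
      intro h
      rw [h] at hfin
      exact Finset.insert_ne_empty _ _ hfin.symm
    obtain ⟨a, t, rfl⟩ := List.exists_cons_of_ne_nil hne
    have ha : a = x₁ ∨ a = x₂ := by
      have : a ∈ ({x₁, x₂} : Finset X) := by
        rw [← hfin]; simp
      simpa using this
    have h1 : blockCount w ((a :: t).take 1) = n := by
      rcases ha with rfl | rfl
      · simpa using hbc1
      · simpa using hbc2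
    calc n = blockCount w ((a :: t).take 1) := h1.symm
      _ ≤ markingNumber w (a :: t) := by
        exact Finset.le_sup (f := fun i => blockCount w (List.take i (a :: t)))
          (by simp : 1 ∈ Finset.range ((a :: t).length + 1))
  have hms : IsMarkingSeq w [x₁, x₂] := by
    refine ⟨by simp [hx], ?_⟩
    rw [hwfin]
    simp
  have hle : markingNumber w [x₁, x₂] ≤ n := by
    apply Finset.sup_le
    intro i hi
    have hi' : i < 3 := by simpa using hi
    interval_cases i
    · rw [show ([x₁, x₂].take 0) = [] from rfl, hbcnil]
      exact Nat.zero_le n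
    · rw [show ([x₁, x₂].take 1) = [x₁] from rfl, hbc1]
    · exact le_trans (hbcfull _ (by simp) (by simp)) hn
  have hnonempty : {m | ∃ σ, IsMarkingSeq w σ ∧ markingNumber w σ = m}.Nonempty :=
    ⟨markingNumber w [x₁, x₂], [x₁, x₂], hms, rfl⟩
  unfold locality
  apply le_antisymm
  · exact le_trans (Nat.sInf_le ⟨[x₁, x₂], hms, rfl⟩) hle
  · obtain ⟨σ, hσ, hm⟩ := Nat.sInf_mem hnonempty
    rw [← hm]
    exact hge σ hσ
end
end

section
/- For every i ≥ 2, the Zimin word Z_i has locality number exactly 2^{i-2}, equivalently (|Z_i|+1)/4. -/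
noncomputable section

attribute [local instance] Classical.propDecidable

variable {X : Type*} [DecidableEq X]

/-- The Zimin words over the distinct letters `1, 2, 3, ...` (as natural numbers):
`Z₁ = x₁` and `Z_{i+1} = Z_i x_{i+1} Z_i`. -/
def zimin : ℕ → List ℕ
  | 0 => []
  | n + 1 => zimin n ++ (n + 1) :: zimin n

lemma blocksAux_append (p : Bool) (l1 l2 : List Bool) :
    blocksAux p (l1 ++ l2) = blocksAux p l1 + blocksAux (l1.getLastD p) l2 := by
  induction l1 generalizing p with
  | nil => simp [blocksAux]
  | cons a t ih =>
    rw [List.cons_append]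
    simp only [blocksAux, ih a]
    cases t <;> simp [List.getLastD] <;> omega

lemma blocksAux_true (l : List Bool) :
    blocksAux false l = blocksAux true l + (if l.headD false = true then 1 else 0) := by
  cases l with
  | nil => simp [blocksAux]
  | cons h t => cases h <;> simp [blocksAux] <;> omega

lemma mem_zimin {x : ℕ} : ∀ {i : ℕ}, x ∈ zimin i ↔ 1 ≤ x ∧ x ≤ i := by
  intro i
  induction i with
  | zero => simp [zimin]; omega
  | succ n ih => simp [zimin, ih]; omega

lemma zimin_cons (i : ℕ) (hi : 1 ≤ i) : ∃ s, zimin i = 1 :: s := by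
  induction i with
  | zero => omega
  | succ n ih =>
    rcases Nat.lt_or_ge n 1 with h | h
    · have : n = 0 := by omega
      subst this
      exact ⟨[], rfl⟩
    · obtain ⟨s, hs⟩ := ih h
      exact ⟨s ++ (n + 1) :: zimin n, by simp [zimin, hs]⟩

lemma zimin_concat (i : ℕ) (hi : 1 ≤ i) : ∃ t, zimin i = t ++ [1] := by
  induction i with
  | zero => omega
  | succ n ih =>
    rcases Nat.lt_or_ge n 1 with h | h
    · have : n = 0 := by omega
      subst this
      exact ⟨[], rfl⟩
    · obtain ⟨t, ht⟩ := ih h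
      exact ⟨zimin n ++ (n + 1) :: t, by simp [zimin, ht]⟩

lemma zimin_length : ∀ i, (zimin i).length = 2 ^ i - 1 := by
  intro i
  induction i with
  | zero => simp [zimin]
  | succ n ih =>
    have h : 1 ≤ 2 ^ n := Nat.one_le_two_pow
    simp [zimin, ih, pow_succ]; omega

def wt : ℕ → List ℕ → ℕ
  | 0, _ => 0
  | 1, _ => 0
  | (n+2), S => 2 * wt (n+1) S + (if (n+2) ∈ S then 1 else 0)

lemma wt_lt : ∀ (i : ℕ) (S : List ℕ), wt i S < 2 ^ (i - 1)
  | 0, S => by simp [wt]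
  | 1, S => by simp [wt]
  | (n+2), S => by
    have h := wt_lt (n+1) S
    have h2 : 2 ^ (n + 2 - 1) = 2 * 2 ^ (n + 1 - 1) := by
      simp [pow_succ]; ring
    simp only [wt]
    split <;> omega

lemma wt_congr : ∀ (i : ℕ) (S S' : List ℕ), (∀ j, 2 ≤ j → (j ∈ S ↔ j ∈ S')) →
    wt i S = wt i S'
  | 0, _, _, _ => rfl
  | 1, _, _, _ => rfl
  | (n+2), S, S', h => by
    have h2 := h (n+2) (by omega)
    simp only [wt, wt_congr (n+1) S S' h, h2]

lemma wt_mono : ∀ (i : ℕ) (S S' : List ℕ), (∀ j, j ∈ S → j ∈ S') →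
    wt i S ≤ wt i S'
  | 0, _, _, _ => le_refl _
  | 1, _, _, _ => le_refl _
  | (n+2), S, S', h => by
    have ih := wt_mono (n+1) S S' h
    simp only [wt]
    by_cases hm : (n+2) ∈ S
    · rw [if_pos hm, if_pos (h _ hm)]; omega
    · rw [if_neg hm]; split <;> omega

lemma wt_nil : ∀ i, wt i ([] : List ℕ) = 0
  | 0 => rfl
  | 1 => rfl
  | (n+2) => by simp [wt, wt_nil (n+1)]

lemma wt_two : ∀ i, 2 ≤ i → wt i [2] = 2 ^ (i - 2)
  | 0, h => by omega
  | 1, h => by omega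
  | 2, _ => by simp [wt]
  | (n+3), h => by
    have ih := wt_two (n+2) (by omega)
    have h2 : (n + 3) ∉ [2] := by simp
    have h3 : 2 ^ (n + 3 - 2) = 2 * 2 ^ (n + 2 - 2) := by simp [pow_succ]; ring
    simp only [wt, h2, if_neg, not_false_iff] at *
    simp at *
    omega

lemma blockCount_zimin (S : List ℕ) : ∀ (i : ℕ), 1 ≤ i →
    blockCount (zimin i) S = if 1 ∈ S then 2 ^ (i - 1) - wt i S else wt i S := by
  intro i
  induction i with
  | zero => omega
  | succ n ih =>
    intro _
    rcases Nat.lt_or_ge n 1 with h | hn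
    · have hn0 : n = 0 := by omega
      subst hn0
      show blocksAux false ([1].map fun x => decide (x ∈ S)) = _
      simp [blocksAux, wt]
    · have IH := ih hn
      set f : ℕ → Bool := fun x => decide (x ∈ S) with hf
      obtain ⟨s, hs⟩ := zimin_cons n hn
      obtain ⟨t, ht⟩ := zimin_concat n hn
      have hlast : ((zimin n).map f).getLastD false = f 1 := by
        rw [ht]; simp
      have hhead : ((zimin n).map f).headD false = f 1 := by
        rw [hs]; simp
      have expand : blockCount (zimin (n+1)) S =
          blockCount (zimin n) S + (if f (n+1) = true ∧ f 1 = false then 1 else 0)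
            + blocksAux (f (n+1)) ((zimin n).map f) := by
        show blocksAux false ((zimin n ++ (n+1) :: zimin n).map f) = _
        rw [List.map_append, blocksAux_append, List.map_cons]
        simp only [hlast, blocksAux]
        show _ = blocksAux false ((zimin n).map f) + _ + _
        omega
      have hwt : wt (n+1) S = 2 * wt n S + (if (n+1) ∈ S then 1 else 0) := by
        rcases n with _ | m
        · omega
        · rfl
      have hbA : blocksAux (f (n+1)) ((zimin n).map f) =
          if (n+1) ∈ S then blockCount (zimin n) S - (if 1 ∈ S then 1 else 0)
          else blockCount (zimin n) S := by
        have hT := blocksAux_true ((zimin n).map f)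
        rw [hhead] at hT
        by_cases hm : (n+1) ∈ S
        · have he : f (n+1) = true := by simp [hf, hm]
          rw [he, if_pos hm]
          by_cases h1 : 1 ∈ S
          · have he1 : f 1 = true := by simp [hf, h1]
            rw [he1] at hT
            norm_num at hT
            simp only [if_pos h1]
            show blocksAux true ((zimin n).map f) = blocksAux false ((zimin n).map f) - 1
            omega
          · have he1 : f 1 = false := by simp [hf, h1]
            rw [he1] at hT
            norm_num at hT
            simp only [if_neg h1]
            show blocksAux true ((zimin n).map f) = blocksAux false ((zimin n).map f) - 0
            omega
        · have he : f (n+1) = false := by simp [hf, hm]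
          rw [he, if_neg hm]
          rfl
      have hwlt := wt_lt n S
      have h1p : (1:ℕ) ≤ 2 ^ (n - 1) := Nat.one_le_two_pow
      have hpow : 2 ^ (n + 1 - 1) = 2 * 2 ^ (n - 1) := by
        have e : n + 1 - 1 = (n - 1) + 1 := by omega
        rw [e, pow_succ]; ring
      rw [expand, hbA, IH, hwt]
      have hfe : (f (n+1) = true ∧ f 1 = false) ↔ ((n+1) ∈ S ∧ ¬ (1 ∈ S)) := by
        simp [hf]
      rw [if_congr hfe rfl rfl]
      by_cases h1 : 1 ∈ S <;> by_cases hm : (n+1) ∈ S <;>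
        simp only [h1, hm, if_true, if_false, not_true, not_false_iff, and_true,
          and_false, true_and, false_and, iff_true, iff_false, Nat.sub_zero] <;>
        omega

lemma take_len (t : List ℕ) (l : List ℕ) : (t ++ l).take t.length = t := by
  induction t with
  | nil => simp
  | cons b r ih => simp [ih]

lemma take_len_succ (t u : List ℕ) (a : ℕ) :
    (t ++ a :: u).take (t.length + 1) = t ++ [a] := by
  induction t with
  | nil => simp
  | cons b r ih => simpa using ih

lemma first_split {a : ℕ} : ∀ {σ : List ℕ}, a ∈ σ → ∃ t u, σ = t ++ a :: u ∧ a ∉ t := by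
  intro σ h
  induction σ with
  | nil => cases h
  | cons b r ih =>
    by_cases hb : a = b
    · exact ⟨[], r, by simp [hb], by simp⟩
    · have hr : a ∈ r := by
        rcases List.mem_cons.mp h with h' | h'
        · exact absurd h' hb
        · exact h'
      obtain ⟨t, u, h1, h2⟩ := ih hr
      exact ⟨b :: t, u, by simp [h1], by simp [h2, hb]⟩

lemma lower_bound (i : ℕ) (hi : 2 ≤ i) (σ : List ℕ) (h : IsMarkingSeq (zimin i) σ) :
    2 ^ (i - 2) ≤ markingNumber (zimin i) σ := by
  have h1σ : 1 ∈ σ := by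
    have h1 : (1:ℕ) ∈ (zimin i).toFinset := by
      simp [mem_zimin]; omega
    rw [← h.2] at h1
    simpa using h1
  obtain ⟨t, u, hsplit, hnot⟩ := first_split h1σ
  have hlen : t.length + 1 ≤ σ.length := by rw [hsplit]; simp
  have htake1 : σ.take t.length = t := by rw [hsplit, take_len]
  have htake2 : σ.take (t.length + 1) = t ++ [1] := by rw [hsplit, take_len_succ]
  have hv1 : blockCount (zimin i) t = wt i t := by
    rw [blockCount_zimin _ _ (by omega), if_neg hnot]
  have hwc : wt i (t ++ [1]) = wt i t := by
    apply wt_congr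
    intro j hj
    simp
    omega
  have hv2 : blockCount (zimin i) (t ++ [1]) = 2 ^ (i - 1) - wt i t := by
    rw [blockCount_zimin _ _ (by omega), if_pos (by simp), hwc]
  have hm1 : blockCount (zimin i) t ≤ markingNumber (zimin i) σ := by
    have h' := Finset.le_sup (f := fun k => blockCount (zimin i) (σ.take k))
      (Finset.mem_range.mpr (by omega : t.length < σ.length + 1))
    simp only [htake1] at h'
    exact h'
  have hm2 : blockCount (zimin i) (t ++ [1]) ≤ markingNumber (zimin i) σ := by
    have h' := Finset.le_sup (f := fun k => blockCount (zimin i) (σ.take k))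
      (Finset.mem_range.mpr (by omega : t.length + 1 < σ.length + 1))
    simp only [htake2] at h'
    exact h'
  have hwlt := wt_lt i t
  have hpow : 2 ^ (i - 1) = 2 * 2 ^ (i - 2) := by
    rw [show i - 1 = (i - 2) + 1 by omega, pow_succ]; ring
  rw [hv1] at hm1
  rw [hv2] at hm2
  omega

/-- For every `i ≥ 2`, the Zimin word `Z_i` has locality number exactly `2^(i-2)`,
equivalently `(|Z_i| + 1) / 4`. -/
theorem locality_zimin (i : ℕ) (hi : 2 ≤ i) :
    locality (zimin i) = 2 ^ (i - 2) ∧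
      locality (zimin i) = ((zimin i).length + 1) / 4 := by
  set σ₀ : List ℕ := 2 :: 1 :: List.range' 3 (i - 2) with hσ
  have hpow : 2 ^ (i - 1) = 2 * 2 ^ (i - 2) := by
    rw [show i - 1 = (i - 2) + 1 by omega, pow_succ]; ring
  have hlen : σ₀.length = i := by simp [hσ]; omega
  have hms : IsMarkingSeq (zimin i) σ₀ := by
    constructor
    · simp [hσ, List.nodup_range', List.mem_range'_1]
    · ext x
      simp [hσ, mem_zimin, List.mem_range'_1]
      omega
  have hval1 : blockCount (zimin i) (σ₀.take 1) = 2 ^ (i - 2) := by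
    show blockCount (zimin i) [2] = _
    rw [blockCount_zimin _ _ (by omega), if_neg (by simp), wt_two i hi]
  have hmn : markingNumber (zimin i) σ₀ = 2 ^ (i - 2) := by
    apply le_antisymm
    · apply Finset.sup_le
      intro k _
      match k with
      | 0 =>
        show blockCount (zimin i) [] ≤ _
        rw [blockCount_zimin _ _ (by omega), if_neg (by simp), wt_nil]
        omega
      | 1 => rw [hval1]
      | (k+2) =>
        have htk : σ₀.take (k+2) = 2 :: 1 :: (List.range' 3 (i-2)).take k := rfl
        rw [htk, blockCount_zimin _ _ (by omega), if_pos (by simp)]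
        have hge : 2 ^ (i - 2) ≤ wt i (2 :: 1 :: (List.range' 3 (i-2)).take k) := by
          rw [← wt_two i hi]
          apply wt_mono
          intro j hj
          simp at hj
          simp [hj]
        omega
    · have h1r : 1 ∈ Finset.range (σ₀.length + 1) := Finset.mem_range.mpr (by omega)
      have h' := Finset.le_sup (f := fun k => blockCount (zimin i) (σ₀.take k)) h1r
      simp only [hval1] at h'
      exact h'
  have hmem : 2 ^ (i - 2) ∈
      {n | ∃ σ, IsMarkingSeq (zimin i) σ ∧ markingNumber (zimin i) σ = n} :=
    ⟨σ₀, hms, hmn⟩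
  have h1 : locality (zimin i) = 2 ^ (i - 2) := by
    apply le_antisymm (Nat.sInf_le hmem)
    apply le_csInf ⟨_, hmem⟩
    rintro n ⟨σ, hσms, rfl⟩
    exact lower_bound i hi σ hσms
  refine ⟨h1, ?_⟩
  rw [h1, zimin_length]
  have h4 : 2 ^ i = 2 ^ (i - 2) * 4 := by
    rw [show i = (i - 2) + 2 by omega, pow_add]; norm_num
  have hp : 1 ≤ 2 ^ i := Nat.one_le_two_pow
  omega
end
end

section
/- For any word w over alphabet X and any marking sequence σ, the marking numbers of σ and its reversal σ^R differ by at most 1: |π_σ(w) − π_{σ^R}(w)| ≤ 1. -/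
noncomputable section

attribute [local instance] Classical.propDecidable

variable {X : Type*} [DecidableEq X]

lemma blocksAux_not_eq (l : List Bool) : ∀ prev,
    (blocksAux prev l : ℤ) - blocksAux (!prev) (l.map not) =
      (l.getLastD prev).toNat - prev.toNat := by
  induction l with
  | nil => intro prev; simp [blocksAux]
  | cons b rest ih =>
    intro prev
    simp only [List.map_cons, blocksAux, List.getLastD_cons]
    have := ih b
    cases b <;> cases prev <;> simp_all <;> omega

lemma blocksAux_true_le (l : List Bool) : blocksAux true l ≤ blocksAux false l := by
  cases l with
  | nil => simp [blocksAux]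
  | cons b rest => cases b <;> simp [blocksAux]

lemma blocksAux_false_le (l : List Bool) : blocksAux false l ≤ blocksAux true l + 1 := by
  cases l with
  | nil => simp [blocksAux]
  | cons b rest => cases b <;> simp [blocksAux, Nat.add_comm]

/-- Complementing the boolean list changes the block count by at most one. -/
lemma blocksAux_not_le (l : List Bool) :
    blocksAux false l ≤ blocksAux false (l.map not) + 1 := by
  have h1 := blocksAux_not_eq l false
  have h2 := blocksAux_true_le (l.map not)
  have h3 : (l.getLastD false).toNat ≤ 1 := Bool.toNat_le _
  simp only [Bool.not_false] at h1
  omega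

lemma markingNumber_le_reverse (w σ : List X) (h : IsMarkingSeq w σ) :
    markingNumber w σ ≤ markingNumber w σ.reverse + 1 := by
  obtain ⟨hnd, hfin⟩ := h
  apply Finset.sup_le
  intro i hi
  rw [Finset.mem_range, Nat.lt_succ_iff] at hi
  set n := σ.length with hn
  -- the complementary stage of the reversed sequence
  have hmem : ∀ x ∈ w, (decide (x ∈ σ.reverse.take (n - i)) : Bool)
      = !(decide (x ∈ σ.take i)) := by
    intro x hx
    have hxσ : x ∈ σ := by
      rw [← List.mem_toFinset, hfin, List.mem_toFinset]; exact hx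
    have htr : σ.reverse.take (n - i) = (σ.drop (n - (n - i))).reverse :=
      List.take_reverse
    have hni : n - (n - i) = i := by omega
    rw [htr, hni]
    have hsplit : x ∈ σ.take i ∨ x ∈ σ.drop i := by
      rw [← List.mem_append, List.take_append_drop]; exact hxσ
    have hnotboth : ¬ (x ∈ σ.take i ∧ x ∈ σ.drop i) := by
      rintro ⟨h1, h2⟩
      exact List.disjoint_take_drop hnd le_rfl h1 h2
    by_cases hc : x ∈ σ.take i <;> simp [hc, List.mem_reverse] <;> tauto
  have hlist : w.map (fun x => decide (x ∈ σ.reverse.take (n - i)))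
      = (w.map (fun x => decide (x ∈ σ.take i))).map not := by
    rw [List.map_map]
    exact List.map_congr_left hmem
  have hbc : blockCount w (σ.take i) ≤ blockCount w (σ.reverse.take (n - i)) + 1 := by
    unfold blockCount
    rw [hlist]
    exact blocksAux_not_le _
  refine hbc.trans (Nat.add_le_add_right ?_ 1)
  apply Finset.le_sup (f := fun j => blockCount w (σ.reverse.take j))
  rw [Finset.mem_range, List.length_reverse]
  omega

/-- The marking numbers of a marking sequence `σ` and of its reversal differ
by at most `1`. -/
theorem markingNumber_reverse (w σ : List X) (h : IsMarkingSeq w σ) :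
    |(markingNumber w σ : ℤ) - (markingNumber w σ.reverse : ℤ)| ≤ 1 := by
  have h1 := markingNumber_le_reverse w σ h
  have hrev : IsMarkingSeq w σ.reverse := by
    obtain ⟨hnd, hfin⟩ := h
    exact ⟨List.nodup_reverse.mpr hnd, by rwa [List.toFinset_reverse]⟩
  have h2 := markingNumber_le_reverse w σ.reverse hrev
  rw [List.reverse_reverse] at h2
  rw [abs_sub_le_iff]
  constructor <;> omega
end
end

section
/- Let H = (V,E) be a connected multigraph with |V| ≥ 2, let H' be the multigraph obtained by duplicating every edge of H, let C be an Eulerian cycle of H', and for an edge e of H' let α_e be the word over alphabet V spelled by the Eulerian path obtained from C by deleting e. Then cutwidth(H) ≤ loc(α_e) ≤ cutwidth(H) + 1. Moreover, there exists a vertex v ∈ V such that loc(α_e) = cutwidth(H) for every edge e of C incident to v. -/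
noncomputable section

attribute [local instance] Classical.propDecidable

variable {X : Type*} [DecidableEq X]

variable {V : Type*} [DecidableEq V]

/-- Size of the largest cut of the linear arrangement `L` for the multigraph with
edge multiset `E`: the maximum, over prefixes of `L`, of the number of edges with
exactly one endpoint in the prefix. -/
def cutVal (E : Multiset (Sym2 V)) (L : List V) : ℕ :=
  Finset.sup (Finset.range (L.length + 1)) (fun i =>
    Multiset.card (E.filter
      (fun e => (∃ v ∈ e, v ∈ L.take i) ∧ ¬ (∀ v ∈ e, v ∈ L.take i))))

/-- The cutwidth of the multigraph with vertex set `Vs` and edge multiset `E`: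
the minimum cut value over all linear arrangements of the vertices. -/
def cutwidthM (Vs : Finset V) (E : Multiset (Sym2 V)) : ℕ :=
  sInf {n | ∃ L : List V, L.Nodup ∧ L.toFinset = Vs ∧ cutVal E L = n}


namespace CutLocAux

open List

/-! ### Boolean block/change counting -/

def chgAux : Bool → List Bool → ℕ
  | _, [] => 0
  | p, x :: r => (if x ≠ p then 1 else 0) + chgAux x r

lemma L1 : ∀ (l : List Bool) (p : Bool),
    2 * blocksAux p l + (if p then 1 else 0)
      = chgAux p l + (if (p :: l).getLast (by simp) then 1 else 0)
  | [], p => by cases p <;> simp [blocksAux, chgAux]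
  | x :: r, p => by
      have ih := L1 r x
      have hgl : (p :: x :: r).getLast (by simp) = (x :: r).getLast (by simp) :=
        List.getLast_cons (by simp)
      rw [hgl]
      simp only [blocksAux, chgAux] at *
      cases p <;> cases x <;> simp at * <;> omega

lemma L2 : ∀ (l : List Bool) (p : Bool),
    ((p :: l).zip l).countP (fun q => q.1 != q.2) = chgAux p l
  | [], p => by simp [chgAux]
  | x :: r, p => by
      have ih := L2 r x
      simp only [List.zip_cons_cons, List.countP_cons, chgAux] at *
      cases p <;> cases x <;> simp at * <;> omega

lemma two_mul_blocks (x : Bool) (r : List Bool) :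
    2 * blocksAux false (x :: r)
      = ((x :: r).zip r).countP (fun q => q.1 != q.2)
        + ((if x then 1 else 0) + (if (x :: r).getLast (by simp) then 1 else 0)) := by
  have h1 := L1 (x :: r) false
  have h2 := L2 r x
  have hgl : (false :: x :: r).getLast (by simp) = (x :: r).getLast (by simp) :=
    List.getLast_cons (by simp)
  rw [hgl] at h1
  simp only [chgAux] at h1
  cases x <;> simp at * <;> omega

/-! ### zip and rotate -/

lemma zip_take' {γ δ : Type*} : ∀ (n : ℕ) (a : List γ) (b : List δ),
    (a.zip b).take n = (a.take n).zip (b.take n)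
  | 0, _, _ => rfl
  | _+1, [], _ => by simp
  | _+1, _ :: _, [] => by simp
  | n+1, a :: as, b :: bs => by simp [zip_take' n as bs]

lemma zip_drop' {γ δ : Type*} : ∀ (n : ℕ) (a : List γ) (b : List δ),
    (a.zip b).drop n = (a.drop n).zip (b.drop n)
  | 0, _, _ => rfl
  | _+1, [], _ => by simp
  | _+1, _ :: _, [] => by simp
  | n+1, a :: as, b :: bs => by simp [zip_drop' n as bs]

lemma zip_rotate' {γ : Type*} (a b : List γ) (h : a.length = b.length) (n : ℕ) :
    (a.rotate n).zip (b.rotate n) = (a.zip b).rotate n := by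
  rcases eq_or_ne a [] with rfl | ha
  · have : b = [] := List.length_eq_zero_iff.mp (by simpa using h.symm)
    subst this; simp
  · have hl : 0 < a.length := List.length_pos_iff.mpr ha
    have hm : n % a.length ≤ a.length := le_of_lt (Nat.mod_lt _ hl)
    have hmb : n % b.length = n % a.length := by rw [h]
    have hz : (a.zip b).length = a.length := by rw [List.length_zip, h, min_self]
    rw [← List.rotate_mod a n, ← List.rotate_mod b n, ← List.rotate_mod (a.zip b) n, hmb, hz,
      List.rotate_eq_drop_append_take hm, List.rotate_eq_drop_append_take (h ▸ hm),
      List.rotate_eq_drop_append_take (hz ▸ hm),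
      List.zip_append (by simp [h]), zip_take', zip_drop']

lemma zip_trunc {γ δ : Type*} (u : List γ) (z : γ) (v : List δ) (h : u.length = v.length) :
    (u ++ [z]).zip v = u.zip v := by
  conv_lhs => rw [show v = v ++ [] from (List.append_nil v).symm]
  rw [List.zip_append h]
  simp

lemma zip_rotate_one {γ : Type*} (l : List γ) (h : l ≠ []) :
    l.zip (l.rotate 1) = l.zip l.tail ++ [(l.getLast h, l.head h)] := by
  obtain ⟨x, r, rfl⟩ := List.exists_cons_of_ne_nil h
  have hrot : (x :: r).rotate 1 = r ++ [x] := by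
    rw [List.rotate_cons_succ, List.rotate_zero]
  have hd : (x :: r).dropLast ++ [(x :: r).getLast h] = x :: r :=
    List.dropLast_append_getLast h
  have hlen : (x :: r).dropLast.length = r.length := by simp
  have h1 : (x :: r).zip (r ++ [x])
      = (x :: r).dropLast.zip r ++ [((x :: r).getLast h, x)] := by
    conv_lhs => rw [← hd]
    rw [List.zip_append hlen]
    rfl
  have h2 : (x :: r).zip r = (x :: r).dropLast.zip r := by
    conv_lhs => rw [← hd]
    rw [zip_trunc _ _ _ hlen]
  rw [hrot, h1, ← h2]
  rfl

/-! ### the word obtained by deleting edge j from the cycle -/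

lemma word_eq_rotate {V : Type*} (c : List V) (j : ℕ) (hj : j + 1 < c.length) :
    c.drop (j + 1) ++ c.tail.take j = c.tail.rotate j := by
  have hjt : j ≤ c.tail.length := by
    rw [List.length_tail]; omega
  rw [List.rotate_eq_drop_append_take hjt]
  congr 1
  rw [← List.drop_one, List.drop_drop, Nat.add_comm]

lemma word_ne_nil {V : Type*} (c : List V) (j : ℕ) (hj : j + 1 < c.length) :
    c.drop (j + 1) ++ c.tail.take j ≠ [] := by
  rw [word_eq_rotate c j hj]
  intro h
  have := congrArg List.length h
  rw [List.length_rotate, List.length_tail] at this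
  simp at this
  omega

lemma cycle_pairs_perm {V : Type*} (c : List V) (hc : c ≠ [])
    (hclosed : c.head hc = c.getLast hc)
    (j : ℕ) (hj : j + 1 < c.length) :
    c.zip c.tail ~
      ((c.drop (j + 1) ++ c.tail.take j).zip (c.drop (j + 1) ++ c.tail.take j).tail)
        ++ [((c.drop (j + 1) ++ c.tail.take j).getLast (word_ne_nil c j hj),
             (c.drop (j + 1) ++ c.tail.take j).head (word_ne_nil c j hj))] := by
  have hα : c.drop (j+1) ++ c.tail.take j = c.tail.rotate j := word_eq_rotate c j hj
  have hαne' := word_ne_nil c j hj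
  have hαne : c.tail.rotate j ≠ [] := by rw [← hα]; exact hαne'
  obtain ⟨x, t, rfl⟩ := List.exists_cons_of_ne_nil hc
  have ht : t ≠ [] := by
    intro h; subst h; simp at hj
  obtain ⟨y, r, rfl⟩ := List.exists_cons_of_ne_nil ht
  simp only [List.tail_cons] at hα hαne ⊢
  have hgl : (y :: r).getLast (by simp) = x := by
    rw [List.getLast_cons (by simp : (y :: r) ≠ [])] at hclosed
    exact hclosed.symm
  set t := y :: r with ht_def
  have stepA : (x :: t).zip t ~ t.zip (t.rotate 1) := by
    have h1 : (x :: t).zip t = (x, y) :: t.zip t.tail := rfl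
    rw [h1, zip_rotate_one t (by simp), hgl]
    exact (List.perm_append_singleton _ _).symm
  have stepB : t.zip (t.rotate 1) ~ (t.rotate j).zip ((t.rotate j).rotate 1) := by
    rw [List.rotate_rotate, Nat.add_comm j 1, ← List.rotate_rotate,
      zip_rotate' t (t.rotate 1) (List.length_rotate t 1).symm j]
    exact (List.rotate_perm _ _).symm
  have stepC := zip_rotate_one (t.rotate j) hαne
  refine (stepA.trans stepB).trans ?_
  rw [stepC]
  simp only [← hα]
  exact List.Perm.refl _

lemma word_head {V : Type*} (c : List V) (j : ℕ) (hj : j + 1 < c.length) :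
    (c.drop (j + 1) ++ c.tail.take j).head (word_ne_nil c j hj) = c.get ⟨j + 1, hj⟩ := by
  have hne : c.drop (j + 1) ≠ [] := by
    intro h
    have := congrArg List.length h
    simp at this; omega
  rw [List.head_append_of_ne_nil hne, List.head_drop]
  rfl

lemma word_getLast {V : Type*} (c : List V) (hc : c ≠ [])
    (hclosed : c.head hc = c.getLast hc) (j : ℕ) (hj : j + 1 < c.length) :
    (c.drop (j + 1) ++ c.tail.take j).getLast (word_ne_nil c j hj)
      = c.get ⟨j, by omega⟩ := by
  rcases Nat.eq_zero_or_pos j with rfl | hjpos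
  · have h0 : c.tail.take 0 = [] := rfl
    have : (c.drop 1 ++ c.tail.take 0).getLast (word_ne_nil c 0 hj)
        = (c.drop 1).getLast (by intro h; have := congrArg List.length h; simp at this; omega) := by
      congr 1
      · rw [h0, List.append_nil]
    rw [this, List.getLast_drop]
    rw [← hclosed, List.head_eq_getElem]
    rfl
  · have htne : c.tail.take j ≠ [] := by
      intro h
      have := congrArg List.length h
      rw [List.length_take, List.length_tail] at this
      simp at this
      omega
    rw [List.getLast_append_of_ne_nil _ htne]
    have hlt : j ≤ c.tail.length := by rw [List.length_tail]; omega
    have hlen : (c.tail.take j).length = j := by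
      rw [List.length_take]; omega
    rw [List.getLast_eq_getElem]
    have := List.getElem_take (xs := c.tail) (j := j)
      (i := (c.tail.take j).length - 1) (h := by omega)
    rw [this, List.getElem_tail]
    congr 1
    omega

lemma word_toFinset {V : Type*} [DecidableEq V] (c : List V) (hc : c ≠ [])
    (hclosed : c.head hc = c.getLast hc) (j : ℕ) (hj : j + 1 < c.length) :
    (c.drop (j + 1) ++ c.tail.take j).toFinset = c.toFinset := by
  rw [word_eq_rotate c j hj]
  rw [List.toFinset_eq_of_perm _ _ (List.rotate_perm c.tail j)]
  obtain ⟨x, t, rfl⟩ := List.exists_cons_of_ne_nil hc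
  have ht : t ≠ [] := by intro h; subst h; simp at hj
  have hx : x ∈ t := by
    have := List.getLast_cons (a := x) ht
    rw [List.head_cons] at hclosed
    rw [this] at hclosed
    rw [hclosed]
    exact List.getLast_mem ht
  simp only [List.tail_cons, List.toFinset_cons]
  rw [Finset.insert_eq_self.mpr (List.mem_toFinset.mpr hx)]

end CutLocAux

section CutLocMain

open List

variable {V : Type*} [DecidableEq V]

lemma cutloc_key_block (S : List V) (w : List V) (hw : w ≠ []) :
    2 * blockCount w S
      = (w.zip w.tail).countP (fun p => decide (p.1 ∈ S) != decide (p.2 ∈ S))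
        + ((if w.head hw ∈ S then 1 else 0) + (if w.getLast hw ∈ S then 1 else 0)) := by
  obtain ⟨x, r, rfl⟩ := List.exists_cons_of_ne_nil hw
  have hmap : (x :: r).map (fun v => decide (v ∈ S))
      = decide (x ∈ S) :: r.map (fun v => decide (v ∈ S)) := rfl
  have h := CutLocAux.two_mul_blocks (decide (x ∈ S)) (r.map (fun v => decide (v ∈ S)))
  rw [blockCount, hmap, h]
  congr 1
  · have hz : (decide (x ∈ S) :: r.map (fun v => decide (v ∈ S))).zip
          (r.map (fun v => decide (v ∈ S)))
        = ((x :: r).zip r).map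
            (Prod.map (fun v => decide (v ∈ S)) (fun v => decide (v ∈ S))) := by
      rw [← List.zip_map]
      rfl
    rw [hz, List.countP_map]
    rfl
  · congr 1
    · simp; congr
    · have : (decide (x ∈ S) :: r.map (fun v => decide (v ∈ S))).getLast (by simp)
          = ((x :: r).map (fun v => decide (v ∈ S))).getLast (by simp) := rfl
      rw [this, List.getLast_map]
      simp

lemma cutloc_cross_pair (S : List V) (x y : V) :
    (decide ((∃ v ∈ s(x,y), v ∈ S) ∧ ¬ (∀ v ∈ s(x,y), v ∈ S)))
      = (decide (x ∈ S) != decide (y ∈ S)) := by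
  by_cases hx : x ∈ S <;> by_cases hy : y ∈ S <;>
    simp [Sym2.mem_iff, hx, hy, decide_eq_true_eq] <;> tauto

lemma cutloc_cross_count_eq (E : Multiset (Sym2 V)) (c : List V)
    (heuler : Multiset.ofList ((c.zip c.tail).map (fun p => s(p.1, p.2))) = E + E)
    (S : List V) :
    2 * Multiset.card (E.filter (fun e => (∃ v ∈ e, v ∈ S) ∧ ¬ (∀ v ∈ e, v ∈ S)))
      = (c.zip c.tail).countP (fun p => decide (p.1 ∈ S) != decide (p.2 ∈ S)) := by
  set P : Sym2 V → Prop := fun e => (∃ v ∈ e, v ∈ S) ∧ ¬ (∀ v ∈ e, v ∈ S) with hP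
  have h1 := congrArg (fun M => Multiset.card (M.filter P)) heuler
  simp only [Multiset.filter_add, Multiset.card_add] at h1
  rw [Multiset.filter_coe, Multiset.coe_card, ← List.countP_eq_length_filter,
    List.countP_map] at h1
  rw [two_mul, ← h1]
  apply List.countP_congr
  intro p _
  rw [Function.comp_apply, cutloc_cross_pair S p.1 p.2]

lemma cutloc_exists_change {γ : Type*} (p : γ → Bool) :
    ∀ (l : List γ), (∃ x ∈ l, p x = true) → (∃ y ∈ l, p y = false) →
      0 < (l.zip l.tail).countP (fun q => p q.1 != p q.2)
  | [] => by simp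
  | [x] => by
      intro hx hy
      simp at hx hy
      rw [hx] at hy; cases hy
  | x :: y :: r => by
      intro hx hy
      by_cases hxy : p x = p y
      · have h1 : 0 < ((y :: r).zip (y :: r).tail).countP (fun q => p q.1 != p q.2) := by
          apply cutloc_exists_change p (y :: r)
          · obtain ⟨a, ha, hpa⟩ := hx
            rcases List.mem_cons.mp ha with rfl | ha'
            · exact ⟨y, by simp, by rw [← hxy]; exact hpa⟩
            · exact ⟨a, ha', hpa⟩
          · obtain ⟨a, ha, hpa⟩ := hy
            rcases List.mem_cons.mp ha with rfl | ha'
            · exact ⟨y, by simp, by rw [← hxy]; exact hpa⟩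
            · exact ⟨a, ha', hpa⟩
        calc 0 < ((y :: r).zip (y :: r).tail).countP (fun q => p q.1 != p q.2) := h1
          _ ≤ _ := by
            rw [show (x :: y :: r).zip (x :: y :: r).tail
              = (x, y) :: ((y :: r).zip (y :: r).tail) from rfl, List.countP_cons]
            omega
      · rw [show (x :: y :: r).zip (x :: y :: r).tail
          = (x, y) :: ((y :: r).zip (y :: r).tail) from rfl, List.countP_cons]
        have : (p x != p y) = true := by
          simp [bne_iff_ne]; exact hxy
        simp [this]

lemma cutloc_block_formula_gen (E : Multiset (Sym2 V)) (c : List V)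
    (heuler : Multiset.ofList ((c.zip c.tail).map (fun p => s(p.1, p.2))) = E + E)
    (w : List V) (hw : w ≠ [])
    (hperm : c.zip c.tail ~ w.zip w.tail ++ [(w.getLast hw, w.head hw)]) (S : List V) :
    blockCount w S
      = Multiset.card (E.filter (fun e => (∃ v ∈ e, v ∈ S) ∧ ¬ (∀ v ∈ e, v ∈ S)))
        + (if w.getLast hw ∈ S ∧ w.head hw ∈ S then 1 else 0) := by
  have hkey := cutloc_key_block S w hw
  have hcc := cutloc_cross_count_eq E c heuler S
  have hp := hperm.countP_eq (p := fun p => decide (p.1 ∈ S) != decide (p.2 ∈ S))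
  rw [List.countP_append] at hp
  have hsingle : (([(w.getLast hw, w.head hw)] : List (V × V)).countP
      (fun p => decide (p.1 ∈ S) != decide (p.2 ∈ S)))
      = if (decide (w.getLast hw ∈ S) != decide (w.head hw ∈ S)) = true
        then 1 else 0 := by
    simp [List.countP_cons]
  rw [hp, hsingle] at hcc
  by_cases h1 : w.getLast hw ∈ S <;> by_cases h2 : w.head hw ∈ S
  · rw [if_pos h2, if_pos h1] at hkey
    rw [if_pos ⟨h1, h2⟩]
    have e1 : (if (decide (w.getLast hw ∈ S) != decide (w.head hw ∈ S)) = true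
        then 1 else 0) = 0 := by simp [h1, h2]
    rw [e1] at hcc
    omega
  · rw [if_pos h1, if_neg h2] at hkey
    rw [if_neg (by tauto)]
    have e1 : (if (decide (w.getLast hw ∈ S) != decide (w.head hw ∈ S)) = true
        then 1 else 0) = 1 := by simp [h1, h2]
    rw [e1] at hcc
    omega
  · rw [if_neg h1, if_pos h2] at hkey
    rw [if_neg (by tauto)]
    have e1 : (if (decide (w.getLast hw ∈ S) != decide (w.head hw ∈ S)) = true
        then 1 else 0) = 1 := by simp [h1, h2]
    rw [e1] at hcc
    omega
  · rw [if_neg h1, if_neg h2] at hkey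
    rw [if_neg (by tauto)]
    have e1 : (if (decide (w.getLast hw ∈ S) != decide (w.head hw ∈ S)) = true
        then 1 else 0) = 0 := by simp [h1, h2]
    rw [e1] at hcc
    omega

end CutLocMain

/-- Let `H` be a connected multigraph with vertex set `Vs` (`|Vs| ≥ 2`) and edge
multiset `E`, and let `c = v₀ v₁ ⋯ v_m` (with `v₀ = v_m`) be an Eulerian cycle of
the multigraph `H'` obtained from `H` by duplicating every edge, i.e. the multiset
of consecutive pairs of `c` is `E + E` and `c` visits every vertex of `Vs`.
For the `j`-th edge `e = {v_j, v_{j+1}}` of the cycle, the word `α_e` spelled by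
the Eulerian path obtained by deleting `e` from `c` is
`v_{j+1} ⋯ v_m v_1 ⋯ v_j = c.drop (j+1) ++ c.tail.take j`.
Then `cutwidth(H) ≤ loc(α_e) ≤ cutwidth(H) + 1` for every edge `e` of the cycle,
and moreover there exists a vertex `v ∈ Vs` such that `loc(α_e) = cutwidth(H)`
for every edge `e` of the cycle incident to `v`. -/
theorem locality_eulerian_word_cutwidth
    (Vs : Finset V) (E : Multiset (Sym2 V)) (h2 : 2 ≤ Vs.card)
    (hE : ∀ e ∈ E, ∀ v ∈ e, v ∈ Vs)
    (c : List V) (hc : c ≠ [])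
    (hclosed : c.head hc = c.getLast hc)
    (hvisit : c.toFinset = Vs)
    (heuler : Multiset.ofList ((c.zip c.tail).map (fun p => s(p.1, p.2))) = E + E) :
    (∀ j, j + 1 < c.length →
        cutwidthM Vs E ≤ locality (c.drop (j + 1) ++ c.tail.take j) ∧
        locality (c.drop (j + 1) ++ c.tail.take j) ≤ cutwidthM Vs E + 1) ∧
    ∃ v ∈ Vs, ∀ j, j + 1 < c.length →
        (getElem? c j = some v ∨ getElem? c (j + 1) = some v) →
        locality (c.drop (j + 1) ++ c.tail.take j) = cutwidthM Vs E := by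
    classical
  have hVne : Vs.Nonempty := Finset.card_pos.mp (by omega)
  have hcwmem : cutwidthM Vs E ∈
      {n | ∃ L : List V, L.Nodup ∧ L.toFinset = Vs ∧ cutVal E L = n} :=
    Nat.sInf_mem ⟨cutVal E Vs.toList, Vs.toList, Finset.nodup_toList Vs,
      Finset.toList_toFinset Vs, rfl⟩
  obtain ⟨L, hLnd, hLfin, hLval⟩ := hcwmem
  have hLne : L ≠ [] := by
    intro h
    rw [h] at hLfin
    simp only [List.toFinset_nil] at hLfin
    rw [← hLfin] at hVne
    simp at hVne
  have hLlen : 0 < L.length := List.length_pos_iff.mpr hLne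
  -- cutwidth is at least one
  have hcw1 : 1 ≤ cutwidthM Vs E := by
    have hz : L.head hLne ∈ Vs := by
      rw [← hLfin]
      exact List.mem_toFinset.mpr (List.head_mem hLne)
    obtain ⟨a, ha, b, hb, hab⟩ := Finset.one_lt_card.mp (by omega : 1 < Vs.card)
    have huex : ∃ u ∈ Vs, u ≠ L.head hLne := by
      by_cases haz : a = L.head hLne
      · exact ⟨b, hb, by rw [← haz]; exact fun h => hab h.symm⟩
      · exact ⟨a, ha, haz⟩
    obtain ⟨u, huVs, hune⟩ := huex
    have hzc : L.head hLne ∈ c := by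
      rw [← List.mem_toFinset, hvisit]; exact hz
    have huc : u ∈ c := by
      rw [← List.mem_toFinset, hvisit]; exact huVs
    have hpos := cutloc_exists_change (fun v => decide (v ∈ [L.head hLne])) c
      ⟨L.head hLne, hzc, by simp⟩ ⟨u, huc, by simp [hune]⟩
    have hpos' : 0 < (c.zip c.tail).countP
        (fun q => decide (q.1 ∈ [L.head hLne]) != decide (q.2 ∈ [L.head hLne])) := hpos
    have hcc := cutloc_cross_count_eq E c heuler [L.head hLne]
    have h1 : 1 ≤ Multiset.card (E.filter
        (fun e => (∃ v ∈ e, v ∈ [L.head hLne]) ∧ ¬ (∀ v ∈ e, v ∈ [L.head hLne]))) := by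
      omega
    have htake : L.take 1 = [L.head hLne] := by
      obtain ⟨z, L', rfl⟩ := List.exists_cons_of_ne_nil hLne
      rfl
    calc 1 ≤ Multiset.card (E.filter
          (fun e => (∃ v ∈ e, v ∈ L.take 1) ∧ ¬ (∀ v ∈ e, v ∈ L.take 1))) := by
            rw [htake]; exact h1
      _ ≤ cutVal E L := Finset.le_sup (f := fun i => Multiset.card (E.filter (fun e => (∃ v ∈ e, v ∈ L.take i) ∧ ¬ (∀ v ∈ e, v ∈ L.take i)))) (Finset.mem_range.mpr (by omega))
      _ = cutwidthM Vs E := hLval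
  -- lower bound : cutwidth ≤ locality
  have hlow : ∀ j, ∀ hj : j + 1 < c.length,
      cutwidthM Vs E ≤ locality (c.drop (j + 1) ++ c.tail.take j) := by
    intro j hj
    have hwne := CutLocAux.word_ne_nil c j hj
    have hwfin : (c.drop (j + 1) ++ c.tail.take j).toFinset = Vs := by
      rw [CutLocAux.word_toFinset c hc hclosed j hj, hvisit]
    have hperm := CutLocAux.cycle_pairs_perm c hc hclosed j hj
    have hF := cutloc_block_formula_gen E c heuler _ hwne hperm
    have hlocmem : locality (c.drop (j + 1) ++ c.tail.take j) ∈
        {n | ∃ σ, IsMarkingSeq (c.drop (j + 1) ++ c.tail.take j) σ ∧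
          markingNumber (c.drop (j + 1) ++ c.tail.take j) σ = n} :=
      Nat.sInf_mem ⟨markingNumber (c.drop (j + 1) ++ c.tail.take j)
          ((c.drop (j + 1) ++ c.tail.take j).toFinset.toList),
        (c.drop (j + 1) ++ c.tail.take j).toFinset.toList,
        ⟨Finset.nodup_toList _, Finset.toList_toFinset _⟩, rfl⟩
    obtain ⟨σ, hσ, hσval⟩ := hlocmem
    rw [← hσval]
    have step1 : cutwidthM Vs E ≤ cutVal E σ :=
      Nat.sInf_le ⟨σ, hσ.1, by rw [hσ.2, hwfin], rfl⟩
    refine step1.trans ?_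
    simp only [cutVal, markingNumber]
    refine Finset.sup_mono_fun ?_
    intro i _
    rw [hF (σ.take i)]
    exact Nat.le_add_right _ _
  -- upper bound : locality ≤ cutwidth + 1
  have hupp : ∀ j, ∀ hj : j + 1 < c.length,
      locality (c.drop (j + 1) ++ c.tail.take j) ≤ cutwidthM Vs E + 1 := by
    intro j hj
    have hwne := CutLocAux.word_ne_nil c j hj
    have hwfin : (c.drop (j + 1) ++ c.tail.take j).toFinset = Vs := by
      rw [CutLocAux.word_toFinset c hc hclosed j hj, hvisit]
    have hperm := CutLocAux.cycle_pairs_perm c hc hclosed j hj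
    have hF := cutloc_block_formula_gen E c heuler _ hwne hperm
    have hms : IsMarkingSeq (c.drop (j + 1) ++ c.tail.take j) L :=
      ⟨hLnd, by rw [hLfin, hwfin]⟩
    have step1 : locality (c.drop (j + 1) ++ c.tail.take j)
        ≤ markingNumber (c.drop (j + 1) ++ c.tail.take j) L :=
      Nat.sInf_le ⟨L, hms, rfl⟩
    refine step1.trans ?_
    rw [← hLval]
    simp only [markingNumber]
    apply Finset.sup_le
    intro i hi
    rw [hF (L.take i)]
    have h2 : Multiset.card (E.filter
        (fun e => (∃ v ∈ e, v ∈ L.take i) ∧ ¬ (∀ v ∈ e, v ∈ L.take i)))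
        ≤ cutVal E L := Finset.le_sup (f := fun i => Multiset.card (E.filter (fun e => (∃ v ∈ e, v ∈ L.take i) ∧ ¬ (∀ v ∈ e, v ∈ L.take i)))) hi
    split_ifs <;> omega
  refine ⟨fun j hj => ⟨hlow j hj, hupp j hj⟩, L.getLast hLne, ?_, ?_⟩
  · rw [← hLfin]
    exact List.mem_toFinset.mpr (List.getLast_mem hLne)
  · intro j hj hcond
    refine le_antisymm ?_ (hlow j hj)
    have hwne := CutLocAux.word_ne_nil c j hj
    have hwfin : (c.drop (j + 1) ++ c.tail.take j).toFinset = Vs := by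
      rw [CutLocAux.word_toFinset c hc hclosed j hj, hvisit]
    have hperm := CutLocAux.cycle_pairs_perm c hc hclosed j hj
    have hF := cutloc_block_formula_gen E c heuler _ hwne hperm
    have hcond' : (c.drop (j + 1) ++ c.tail.take j).getLast hwne = L.getLast hLne ∨
        (c.drop (j + 1) ++ c.tail.take j).head hwne = L.getLast hLne := by
      rcases hcond with h | h
      · left
        obtain ⟨hlt, hget⟩ := List.getElem?_eq_some_iff.mp h
        rw [CutLocAux.word_getLast c hc hclosed j hj]
        exact hget
      · right
        obtain ⟨hlt, hget⟩ := List.getElem?_eq_some_iff.mp h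
        rw [CutLocAux.word_head c j hj]
        exact hget
    have hnotmem : ∀ i, i < L.length → L.getLast hLne ∉ L.take i := by
      intro i hilt hmem
      obtain ⟨k, hk, hkv⟩ := List.getElem_of_mem hmem
      rw [List.getElem_take] at hkv
      have hkl : k < i := by
        rw [List.length_take] at hk; omega
      rw [List.getLast_eq_getElem] at hkv
      have := (List.Nodup.getElem_inj_iff hLnd).mp hkv
      omega
    have step1 : locality (c.drop (j + 1) ++ c.tail.take j)
        ≤ markingNumber (c.drop (j + 1) ++ c.tail.take j) L :=
      Nat.sInf_le ⟨L, ⟨hLnd, by rw [hLfin, hwfin]⟩, rfl⟩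
    refine step1.trans ?_
    simp only [markingNumber]
    apply Finset.sup_le
    intro i hi
    rw [hF (L.take i)]
    rcases lt_or_ge i L.length with hilt | hige
    · have hnot : ¬((c.drop (j + 1) ++ c.tail.take j).getLast hwne ∈ L.take i ∧
          (c.drop (j + 1) ++ c.tail.take j).head hwne ∈ L.take i) := by
        rintro ⟨hg, hh⟩
        rcases hcond' with he | he
        · exact hnotmem i hilt (he ▸ hg)
        · exact hnotmem i hilt (he ▸ hh)
      rw [if_neg hnot, add_zero, ← hLval]
      exact Finset.le_sup (f := fun i => Multiset.card (E.filter (fun e => (∃ v ∈ e, v ∈ L.take i) ∧ ¬ (∀ v ∈ e, v ∈ L.take i)))) hi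
    · have hieq : i = L.length := by
        rw [Finset.mem_range] at hi; omega
      subst hieq
      rw [List.take_length]
      have hQ0 : Multiset.card (E.filter
          (fun e => (∃ v ∈ e, v ∈ L) ∧ ¬ (∀ v ∈ e, v ∈ L))) = 0 := by
        apply Multiset.card_eq_zero.mpr
        apply Multiset.filter_eq_nil.mpr
        intro e he hcontra
        exact hcontra.2 (fun x hx => List.mem_toFinset.mp (by rw [hLfin]; exact hE e he x hx))
      rw [hQ0]
      split_ifs <;> omega
end
end

section
/- For every condensed word α, pathwidth(G_α) ≤ 2·loc(α), where G_α is the graph on vertex set {1,...,|α|} whose edges connect consecutive positions i and i+1, and additionally connect every pair of positions carrying the same letter. -/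
noncomputable section

attribute [local instance] Classical.propDecidable

variable {X : Type*} [DecidableEq X]

/-- `B 0, B 1, ..., B m` is a path decomposition of the graph `G`: every edge is
covered by some bag, and the bags containing any fixed vertex form a nonempty
contiguous interval of indices. -/
def IsPathDecomp {W : Type*} (G : SimpleGraph W) (m : ℕ) (B : ℕ → Finset W) : Prop :=
  (∀ u v, G.Adj u v → ∃ t ≤ m, u ∈ B t ∧ v ∈ B t) ∧
  (∀ v : W, ∃ i j, i ≤ j ∧ j ≤ m ∧ ∀ t, v ∈ B t ↔ (i ≤ t ∧ t ≤ j))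

/-- The pathwidth of a graph: the minimum, over path decompositions, of the
maximum bag size minus one. -/
def pathwidth {W : Type*} (G : SimpleGraph W) : ℕ :=
  sInf {w | ∃ m B, IsPathDecomp G m B ∧ ∀ t, (B t).card ≤ w + 1}

/-- The graph `G_α` of the word `α`: vertices are the positions of `α`, and edges
connect consecutive positions as well as every pair of distinct positions carrying
the same letter. -/
def wordGraph (α : List X) : SimpleGraph (Fin α.length) :=
  SimpleGraph.fromRel (fun i j => ((i : ℕ) + 1 = (j : ℕ)) ∨ α.get i = α.get j)

namespace PWAux
open Finset

lemma mem_take_iff_indexOf_lt (x : X) (l : List X) (c : ℕ) (h : x ∈ l) :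
    x ∈ l.take c ↔ l.idxOf x < c := by
  induction l generalizing c with
  | nil => simp at h
  | cons a tl ih =>
    cases c with
    | zero => simp
    | succ c =>
      by_cases hx : x = a
      · subst hx; simp [List.take_succ_cons, List.idxOf_cons_self]
      · have hmem : x ∈ tl := by
          rcases List.mem_cons.1 h with h' | h'
          · exact absurd h' hx
          · exact h'
        rw [List.take_succ_cons, List.mem_cons, List.idxOf_cons_ne _ (by exact fun h => hx h.symm)]
        simp only [hx, false_or]
        rw [ih c hmem]
        omega

lemma blocksAux_eq_card (bs : List Bool) (prev : Bool) :
    blocksAux prev bs = ((Finset.range bs.length).filter (fun i =>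
      bs.getD i false = true ∧ (if i = 0 then prev else bs.getD (i-1) false) = false)).card := by
  induction bs generalizing prev with
  | nil => simp [blocksAux]
  | cons b rest ih =>
    rw [Finset.card_filter]
    rw [show (b :: rest).length = rest.length + 1 from rfl, Finset.sum_range_succ']
    have h1 : ∀ i, (if (b :: rest).getD (i+1) false = true ∧
        (if i + 1 = 0 then prev else (b :: rest).getD (i+1-1) false) = false then 1 else 0)
        = (if rest.getD i false = true ∧ (if i = 0 then b else rest.getD (i-1) false) = false
           then 1 else 0) := by
      intro i
      congr 1
      simp only [List.getD_cons_succ, Nat.add_sub_cancel, if_neg (Nat.succ_ne_zero i)]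
      cases i with
      | zero => simp
      | succ i => simp [List.getD_cons_succ]
    simp only [h1]
    rw [show blocksAux prev (b :: rest) =
      (if b = true ∧ prev = false then 1 else 0) + blocksAux b rest from rfl, ih b,
      Finset.card_filter]
    simp [Nat.add_comm]

noncomputable def leftE (M : ℕ → Prop) : ℕ → ℕ
  | 0 => 0
  | (u+1) => if M u then leftE M u else u + 1

lemma leftE_le (M : ℕ → Prop) (u : ℕ) : leftE M u ≤ u := by
  induction u with
  | zero => simp [leftE]
  | succ u ih =>
    rw [leftE]
    split
    · omega
    · omega

lemma leftE_between (M : ℕ → Prop) (u : ℕ) : ∀ i, leftE M u ≤ i → i < u → M i := by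
  induction u with
  | zero => omega
  | succ u ih =>
    intro i h1 h2
    rw [leftE] at h1
    split at h1
    · rcases Nat.lt_or_ge i u with h | h
      · exact ih i h1 h
      · have : i = u := by omega
        subst this; assumption
    · omega

lemma leftE_zero_or (M : ℕ → Prop) (u : ℕ) : leftE M u = 0 ∨ ¬ M (leftE M u - 1) := by
  induction u with
  | zero => left; simp [leftE]
  | succ u ih =>
    rw [leftE]
    split
    · exact ih
    · right; simpa using ‹¬ M u›

lemma leftE_mem (M : ℕ → Prop) (u : ℕ) (h : M u) : M (leftE M u) := by
  rcases Nat.lt_or_ge (leftE M u) u with h' | h'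
  · exact leftE_between M u _ le_rfl h'
  · have : leftE M u = u := le_antisymm (leftE_le M u) h'
    rw [this]; exact h

lemma leftE_inj (M : ℕ → Prop) (u p : ℕ) (hu : M u) (hp : M p)
    (hu1 : ¬ M (u+1)) (hp1 : ¬ M (p+1)) (h : leftE M u = leftE M p) : u = p := by
  rcases lt_trichotomy u p with hlt | heq | hgt
  · exfalso
    have h1 : leftE M p ≤ u + 1 := le_trans (h ▸ leftE_le M u) (by omega)
    rcases Nat.lt_or_ge (u+1) p with h2 | h2
    · exact hu1 (leftE_between M p _ h1 h2)
    · have : u + 1 = p := by omega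
      exact hu1 (this ▸ hp)
  · exact heq
  · exfalso
    have h1 : leftE M u ≤ p + 1 := le_trans (h ▸ leftE_le M p) (by omega)
    rcases Nat.lt_or_ge (p+1) u with h2 | h2
    · exact hp1 (leftE_between M u _ h1 h2)
    · have : p + 1 = u := by omega
      exact hp1 (this ▸ hu)

end PWAux
namespace PWAux
open Finset

variable (α σ : List X)

/-- Marking time of position `i` (1-based stage index); `σ.length + 1` if out of range. -/
noncomputable def tauN (i : ℕ) : ℕ :=
  if h : i < α.length then σ.idxOf (α.get ⟨i, h⟩) + 1 else σ.length + 1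

/-- Number of neighbours of `i` marked strictly earlier. -/
noncomputable def aN (i : ℕ) : ℕ :=
  (if 0 < i ∧ tauN α σ (i-1) < tauN α σ i then 1 else 0) +
  (if tauN α σ (i+1) < tauN α σ i then 1 else 0)

/-- Global placement order key. -/
noncomputable def rhoN (i : ℕ) : ℕ :=
  3 * α.length * tauN α σ i + α.length * (2 - aN α σ i) + i

lemma tauN_fin (p : Fin α.length) : tauN α σ p.val = σ.idxOf (α.get p) + 1 := by
  rw [tauN, dif_pos p.isLt]

lemma aN_le_two (i : ℕ) : aN α σ i ≤ 2 := by
  rw [aN]; split <;> split <;> omega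

lemma tauN_pos (i : ℕ) : 1 ≤ tauN α σ i := by
  rw [tauN]; split <;> omega

lemma tauN_le_of_mem (i : ℕ) (h : i < α.length) (hm : α.get ⟨i, h⟩ ∈ σ) :
    tauN α σ i ≤ σ.length := by
  rw [tauN, dif_pos h]
  have := List.idxOf_lt_length_iff.2 hm
  omega

lemma lt_length_of_tauN_le (i : ℕ) (h : tauN α σ i ≤ σ.length) : i < α.length := by
  by_contra hc
  rw [tauN, dif_neg hc] at h
  omega

lemma rho_lt_of_tau_lt (i k : ℕ) (hi : i < α.length) (hk : k < α.length)
    (h : tauN α σ i < tauN α σ k) : rhoN α σ i < rhoN α σ k := by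
  rw [rhoN, rhoN]
  have h1 : α.length * (2 - aN α σ i) ≤ α.length * 2 := Nat.mul_le_mul_left _ (by omega)
  have h2 : 3 * α.length * tauN α σ i + 3 * α.length ≤ 3 * α.length * tauN α σ k := by
    calc 3 * α.length * tauN α σ i + 3 * α.length = 3 * α.length * (tauN α σ i + 1) := by ring
    _ ≤ 3 * α.length * tauN α σ k := Nat.mul_le_mul_left _ (by omega)
  omega

lemma rho_lt_of_a_lt (i k : ℕ) (hi : i < α.length) (hk : k < α.length)
    (hτ : tauN α σ i = tauN α σ k) (h : aN α σ k < aN α σ i) : rhoN α σ i < rhoN α σ k := by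
  rw [rhoN, rhoN, hτ]
  have h1 : aN α σ i ≤ 2 := aN_le_two α σ i
  have h2 : α.length * (2 - aN α σ i) + α.length ≤ α.length * (2 - aN α σ k) := by
    calc α.length * (2 - aN α σ i) + α.length = α.length * ((2 - aN α σ i) + 1) := by ring
    _ ≤ α.length * (2 - aN α σ k) := Nat.mul_le_mul_left _ (by omega)
  omega

lemma rho_inj (i k : ℕ) (hi : i < α.length) (hk : k < α.length)
    (h : rhoN α σ i = rhoN α σ k) : i = k := by
  rcases lt_trichotomy (tauN α σ i) (tauN α σ k) with ht | ht | ht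
  · exact absurd h (Nat.ne_of_lt (rho_lt_of_tau_lt α σ i k hi hk ht))
  · rcases lt_trichotomy (aN α σ i) (aN α σ k) with ha | ha | ha
    · exact absurd h.symm (Nat.ne_of_lt (rho_lt_of_a_lt α σ k i hk hi ht.symm ha))
    · rw [rhoN, rhoN, ht, ha] at h; omega
    · exact absurd h (Nat.ne_of_lt (rho_lt_of_a_lt α σ i k hi hk ht ha))
  · exact absurd h.symm (Nat.ne_of_lt (rho_lt_of_tau_lt α σ k i hk hi ht))

lemma tau_le_of_rho_le (i k : ℕ) (hi : i < α.length) (hk : k < α.length)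
    (h : rhoN α σ i ≤ rhoN α σ k) : tauN α σ i ≤ tauN α σ k := by
  by_contra hc
  exact absurd h (not_le.2 (rho_lt_of_tau_lt α σ k i hk hi (by omega)))

lemma a_le_of_rho_le (i k : ℕ) (hi : i < α.length) (hk : k < α.length)
    (hτ : tauN α σ i = tauN α σ k) (h : rhoN α σ i ≤ rhoN α σ k) : aN α σ k ≤ aN α σ i := by
  by_contra hc
  exact absurd h (not_le.2 (rho_lt_of_a_lt α σ k i hk hi hτ.symm (by omega)))

lemma rho_le_bound (i : ℕ) (hi : i < α.length) :
    rhoN α σ i ≤ 3 * α.length * (σ.length + 1) + 3 * α.length := by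
  rw [rhoN]
  have h1 : tauN α σ i ≤ σ.length + 1 := by
    rw [tauN]; split
    · have := List.idxOf_le_length (a := α.get ⟨i, ‹_›⟩) (l := σ)
      omega
    · omega
  have h2 : 3 * α.length * tauN α σ i ≤ 3 * α.length * (σ.length + 1) :=
    Nat.mul_le_mul_left _ h1
  have h3 : α.length * (2 - aN α σ i) ≤ α.length * 2 := Nat.mul_le_mul_left _ (by omega)
  omega

end PWAux
namespace PWAux
open Finset

variable (α σ : List X)

lemma blockCount_take_eq (c : ℕ) (hc : c ≤ σ.length) (hmem : ∀ p : Fin α.length, α.get p ∈ σ) :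
    blockCount α (σ.take c) = ((Finset.range α.length).filter
      (fun i => tauN α σ i ≤ c ∧ (i = 0 ∨ ¬ tauN α σ (i-1) ≤ c))).card := by
  have hgetD : ∀ m, (hm : m < α.length) →
      ((α.map (fun x => decide (x ∈ σ.take c))).getD m false = true ↔ tauN α σ m ≤ c) := by
    intro m hm
    have hlen : m < (α.map (fun x => decide (x ∈ σ.take c))).length := by simpa using hm
    rw [List.getD_eq_getElem _ _ hlen]
    simp only [List.getElem_map]
    rw [decide_eq_true_iff]
    have hmm : α[m] ∈ σ := hmem ⟨m, hm⟩
    rw [mem_take_iff_indexOf_lt _ _ _ hmm, tauN, dif_pos hm]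
    simp only [List.get_eq_getElem]
    omega
  rw [blockCount, blocksAux_eq_card, List.length_map]
  congr 1
  apply Finset.filter_congr
  intro i hi
  have hi' : i < α.length := Finset.mem_range.1 hi
  constructor
  · rintro ⟨h1, h2⟩
    refine ⟨(hgetD i hi').1 h1, ?_⟩
    by_cases h0 : i = 0
    · exact Or.inl h0
    · right
      rw [if_neg h0] at h2
      intro hcon
      have := (hgetD (i-1) (by omega)).2 hcon
      rw [h2] at this
      exact absurd this (by simp)
  · rintro ⟨h1, h2⟩
    refine ⟨(hgetD i hi').2 h1, ?_⟩
    by_cases h0 : i = 0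
    · rw [if_pos h0]
    · rw [if_neg h0]
      rcases h2 with h2 | h2
      · exact absurd h2 h0
      · rcases Bool.eq_false_or_eq_true ((α.map (fun x => decide (x ∈ σ.take c))).getD (i-1) false)
          with hb | hb
        · exact absurd ((hgetD (i-1) (by omega)).1 hb) h2
        · exact hb

lemma LS_card_le (c : ℕ) (hc : c ≤ σ.length) (hmem : ∀ p : Fin α.length, α.get p ∈ σ) :
    ((Finset.range α.length).filter
      (fun i => tauN α σ i ≤ c ∧ (i = 0 ∨ ¬ tauN α σ (i-1) ≤ c))).card ≤ markingNumber α σ := by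
  rw [← blockCount_take_eq α σ c hc hmem, markingNumber]
  exact Finset.le_sup (f := fun i => blockCount α (σ.take i)) (Finset.mem_range.2 (by omega))

noncomputable def bagB (t : ℕ) : Finset (Fin α.length) :=
  Finset.univ.filter (fun u => rhoN α σ u.val ≤ t ∧
    (rhoN α σ u.val = t ∨ ∃ w : Fin α.length, (wordGraph α).Adj u w ∧ t ≤ rhoN α σ w.val))

lemma adj_iff (u w : Fin α.length) : (wordGraph α).Adj u w ↔ u ≠ w ∧
    ((u.val + 1 = w.val ∨ α.get u = α.get w) ∨ (w.val + 1 = u.val ∨ α.get w = α.get u)) := by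
  rw [wordGraph]
  exact SimpleGraph.fromRel_adj _ _ _

lemma isPathDecomp_bagB :
    IsPathDecomp (wordGraph α) (3*α.length*(σ.length+1)+3*α.length) (bagB α σ) := by
  constructor
  · intro u w hadj
    rcases le_or_gt (rhoN α σ u.val) (rhoN α σ w.val) with h | h
    · exact ⟨rhoN α σ w.val, rho_le_bound α σ _ w.isLt,
        Finset.mem_filter.2 ⟨Finset.mem_univ _, h, Or.inr ⟨w, hadj, le_rfl⟩⟩,
        Finset.mem_filter.2 ⟨Finset.mem_univ _, le_rfl, Or.inl rfl⟩⟩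
    · exact ⟨rhoN α σ u.val, rho_le_bound α σ _ u.isLt,
        Finset.mem_filter.2 ⟨Finset.mem_univ _, le_rfl, Or.inl rfl⟩,
        Finset.mem_filter.2 ⟨Finset.mem_univ _, le_of_lt h, Or.inr ⟨u, hadj.symm, le_rfl⟩⟩⟩
  · intro v
    set N := Finset.univ.filter (fun w : Fin α.length => (wordGraph α).Adj v w) with hN
    refine ⟨rhoN α σ v.val, max (rhoN α σ v.val) (N.sup (fun w => rhoN α σ w.val)),
      le_max_left _ _, ?_, ?_⟩
    · apply max_le (rho_le_bound α σ _ v.isLt)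
      apply Finset.sup_le
      intro w _
      exact rho_le_bound α σ _ w.isLt
    · intro t
      constructor
      · intro ht
        obtain ⟨-, h1, h2⟩ := Finset.mem_filter.1 ht
        refine ⟨h1, ?_⟩
        rcases h2 with h2 | ⟨w, hadj, hw⟩
        · exact h2 ▸ le_max_left _ _
        · exact le_trans (le_trans hw (Finset.le_sup (f := fun w => rhoN α σ w.val)
            (Finset.mem_filter.2 ⟨Finset.mem_univ _, hadj⟩))) (le_max_right _ _)
      · rintro ⟨h1, h2⟩
        refine Finset.mem_filter.2 ⟨Finset.mem_univ _, h1, ?_⟩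
        rcases eq_or_lt_of_le h1 with he | hlt
        · exact Or.inl he
        · right
          have hsup : t ≤ N.sup (fun w => rhoN α σ w.val) := by omega
          have hne : N.Nonempty := by
            by_contra hne
            rw [Finset.not_nonempty_iff_eq_empty.1 hne] at hsup
            simp at hsup
            omega
          obtain ⟨w, hwN, hmax⟩ := Finset.exists_mem_eq_sup N hne (fun w => rhoN α σ w.val)
          refine ⟨w, (Finset.mem_filter.1 hwN).2, ?_⟩
          rw [hmax] at hsup
          exact hsup

end PWAux
namespace PWAux
open Finset

variable (α σ : List X)

lemma card_bag_rho_le (hms : IsMarkingSeq α σ) (hcond : α.Chain' (· ≠ ·)) (v : Fin α.length) :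
    (bagB α σ (rhoN α σ v.val)).card ≤ 2 * markingNumber α σ + 1 := by
  classical
  set t := rhoN α σ v.val with ht
  set j := tauN α σ v.val with hj
  have hmem : ∀ p : Fin α.length, α.get p ∈ σ := by
    intro p
    have h1 : α.get p ∈ α := List.get_mem α p
    rw [← List.mem_toFinset, hms.2, List.mem_toFinset]
    exact h1
  have hj1 : 1 ≤ j := tauN_pos α σ _
  have hjs : j ≤ σ.length := tauN_le_of_mem α σ v.val v.isLt (by
    have := hmem v
    simpa using this)
  -- condensedness: adjacent positions have different marking times
  have hτne : ∀ i, i < α.length → tauN α σ (i+1) ≠ tauN α σ i := by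
    intro i hi heq
    by_cases h1 : i + 1 < α.length
    · have e1 : tauN α σ (i+1) = σ.idxOf (α.get ⟨i+1, h1⟩) + 1 := by
        rw [tauN, dif_pos h1]
      have e2 : tauN α σ i = σ.idxOf (α.get ⟨i, hi⟩) + 1 := by
        rw [tauN, dif_pos hi]
      rw [e1, e2] at heq
      have hinj := (List.idxOf_inj (y := α.get ⟨i, hi⟩) (hmem ⟨i+1, h1⟩)).1 (by omega)
      have hchain := List.isChain_iff_getElem.1 hcond i (by omega)
      exact hchain hinj.symm
    · have e1 : tauN α σ (i+1) = σ.length + 1 := by rw [tauN, dif_neg h1]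
      have e2 : tauN α σ i ≤ σ.length := tauN_le_of_mem α σ i hi (hmem ⟨i, hi⟩)
      omega
  -- order facts
  have hρτ : ∀ i, i < α.length → t ≤ rhoN α σ i → j ≤ tauN α σ i :=
    fun i hi h => tau_le_of_rho_le α σ v.val i v.isLt hi h
  have hτρ : ∀ i, i < α.length → rhoN α σ i ≤ t → tauN α σ i ≤ j :=
    fun i hi h => tau_le_of_rho_le α σ i v.val hi v.isLt h
  have hxa : ∀ u : Fin α.length, rhoN α σ u.val ≤ t → tauN α σ u.val = j → aN α σ v.val ≤ aN α σ u.val :=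
    fun u h hτ => a_le_of_rho_le α σ u.val v.val u.isLt v.isLt hτ h
  have hxa' : ∀ i, i < α.length → t ≤ rhoN α σ i → tauN α σ i = j → aN α σ i ≤ aN α σ v.val :=
    fun i hi h hτ => a_le_of_rho_le α σ v.val i v.isLt hi hτ.symm h
  set cA : Prop := 1 ≤ aN α σ v.val with hcA
  set M : ℕ → Prop := fun i => if cA then tauN α σ i < j else tauN α σ i ≤ j with hM
  have hMpos : ∀ (h : cA) i, M i ↔ tauN α σ i < j := by
    intro h i; rw [hM]; simp only [if_pos h]
  have hMneg : ∀ (h : ¬ cA) i, M i ↔ tauN α σ i ≤ j := by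
    intro h i; rw [hM]; simp only [if_neg h]
  set LS1 : Finset ℕ := (Finset.range α.length).filter
    (fun i => tauN α σ i < j ∧ (i = 0 ∨ ¬ tauN α σ (i-1) < j)) with hLS1
  set LSM : Finset ℕ := (Finset.range α.length).filter (fun i => M i ∧ (i = 0 ∨ ¬ M (i-1))) with hLSM
  have hcard1 : LS1.card ≤ markingNumber α σ := by
    have he : LS1 = (Finset.range α.length).filter
        (fun i => tauN α σ i ≤ j - 1 ∧ (i = 0 ∨ ¬ tauN α σ (i-1) ≤ j - 1)) := by
      rw [hLS1]
      apply Finset.filter_congr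
      intro i _
      constructor
      · rintro ⟨h1, h2⟩
        refine ⟨by omega, ?_⟩
        rcases h2 with h2 | h2
        · exact Or.inl h2
        · exact Or.inr (by omega)
      · rintro ⟨h1, h2⟩
        refine ⟨by omega, ?_⟩
        rcases h2 with h2 | h2
        · exact Or.inl h2
        · exact Or.inr (by omega)
    rw [he]
    exact LS_card_le α σ (j-1) (by omega) hmem
  have hcardM : LSM.card ≤ markingNumber α σ := by
    by_cases hca : cA
    · have he : LSM = LS1 := by
        rw [hLSM, hLS1]
        apply Finset.filter_congr
        intro i _
        simp only [hMpos hca]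
      rw [he]; exact hcard1
    · have he : LSM = (Finset.range α.length).filter
          (fun i => tauN α σ i ≤ j ∧ (i = 0 ∨ ¬ tauN α σ (i-1) ≤ j)) := by
        rw [hLSM]
        apply Finset.filter_congr
        intro i _
        simp only [hMneg hca]
      rw [he]
      exact LS_card_le α σ j hjs hmem
  -- the injection
  set φ : Fin α.length → ℕ := fun u =>
    if u = v then 2*α.length+2
    else if tauN α σ u.val = j then
      (if cA ∧ 0 < u.val ∧ tauN α σ (u.val-1) < j then 2 * (leftE M (u.val-1)) + 1
       else if tauN α σ (u.val+1) < j then 2*(u.val+1)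
       else 2 * (leftE M u.val) + 1)
    else
      (if 0 < u.val ∧ t ≤ rhoN α σ (u.val-1) then 2*u.val
       else 2 * (leftE M u.val) + 1) with hφ
  set T : Finset ℕ :=
    (LS1.image (fun q => 2*q) ∪ LSM.image (fun q => 2*q+1)) ∪ {2*α.length+2} with hT
  have hℓLS : ∀ r, r < α.length → M r → leftE M r ∈ LSM := by
    intro r hr hMr
    rw [hLSM]
    refine Finset.mem_filter.2 ⟨Finset.mem_range.2 (by have := leftE_le M r; omega), ?_, ?_⟩
    · exact leftE_mem M r hMr
    · exact leftE_zero_or M r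
  have hbagE : ∀ u ∈ bagB α σ t, rhoN α σ u.val ≤ t ∧ (rhoN α σ u.val = t ∨
      ∃ w : Fin α.length, (wordGraph α).Adj u w ∧ t ≤ rhoN α σ w.val) :=
    fun u hu => (Finset.mem_filter.1 hu).2
  have hlt : ∀ u ∈ bagB α σ t, u ≠ v → rhoN α σ u.val < t := by
    intro u hu hne
    rcases lt_or_eq_of_le (hbagE u hu).1 with h | h
    · exact h
    · exact absurd (Fin.ext (rho_inj α σ u.val v.val u.isLt v.isLt h)) hne
  have hact : ∀ u ∈ bagB α σ t, u ≠ v → tauN α σ u.val < j →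
      ¬(0 < u.val ∧ t ≤ rhoN α σ (u.val-1)) → u.val + 1 < α.length ∧ t ≤ rhoN α σ (u.val+1) := by
    intro u hu hne hτlt hnl
    rcases (hbagE u hu).2 with he | ⟨w, hadj, hw⟩
    · exact absurd (Fin.ext (rho_inj α σ u.val v.val u.isLt v.isLt he)) hne
    · have hwτ : j ≤ tauN α σ w.val := hρτ w.val w.isLt hw
      obtain ⟨hne2, hcase⟩ := (adj_iff α u w).1 hadj
      have hlet : α.get u = α.get w → False := by
        intro hl
        have : tauN α σ w.val = tauN α σ u.val := by
          rw [tauN_fin α σ w, tauN_fin α σ u, hl]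
        omega
      rcases hcase with (h | h) | (h | h)
      · refine ⟨by rw [h]; exact w.isLt, by rw [h]; exact hw⟩
      · exact absurd h hlet
      · exact absurd ⟨by omega, by rw [show u.val - 1 = w.val by omega]; exact hw⟩ hnl
      · exact absurd h.symm hlet
  -- branch analysis: value description of φ on bag members other than v
  have hspec : ∀ u ∈ bagB α σ t, u ≠ v →
      ((∃ q, φ u = 2*q ∧ q ∈ LS1 ∧
         ((q = u.val + 1 ∧ tauN α σ u.val = j) ∨
          (q = u.val ∧ 0 < u.val ∧ t ≤ rhoN α σ (u.val-1)))) ∨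
       (∃ r, φ u = 2 * leftE M r + 1 ∧ r < α.length ∧ M r ∧ ¬ M (r+1) ∧
         ((r = u.val ∧ (tauN α σ u.val = j ∨ t ≤ rhoN α σ (u.val+1))) ∨
          (r + 1 = u.val ∧ cA)))) := by
    intro u hu hne
    have hρu : rhoN α σ u.val ≤ t := (hbagE u hu).1
    have hρu' : rhoN α σ u.val < t := hlt u hu hne
    have hτu : tauN α σ u.val ≤ j := hτρ u.val u.isLt hρu
    by_cases hx : tauN α σ u.val = j
    · by_cases hbl : cA ∧ 0 < u.val ∧ tauN α σ (u.val-1) < j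
      · right
        refine ⟨u.val - 1, ?_, by omega, ?_, ?_, Or.inr ⟨by omega, hbl.1⟩⟩
        · simp only [hφ]
          rw [if_neg hne, if_pos hx, if_pos hbl]
        · exact (hMpos hbl.1 _).2 hbl.2.2
        · rw [show u.val - 1 + 1 = u.val by omega, hMpos hbl.1]
          omega
      · by_cases hbr : tauN α σ (u.val+1) < j
        · left
          refine ⟨u.val + 1, ?_, ?_, Or.inl ⟨rfl, hx⟩⟩
          · simp only [hφ]
            rw [if_neg hne, if_pos hx, if_neg hbl, if_pos hbr]
          · rw [hLS1]
            refine Finset.mem_filter.2 ⟨Finset.mem_range.2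
              (lt_length_of_tauN_le α σ (u.val+1) (by omega)), hbr, Or.inr ?_⟩
            rw [Nat.add_sub_cancel]
            omega
        · right
          have hnca : ¬ cA := by
            intro hca
            have hav := hxa u hρu hx
            have hz : aN α σ u.val = 0 := by
              simp only [aN, hx]
              rw [if_neg (fun hcon => hbl ⟨hca, hcon.1, hcon.2⟩), if_neg hbr]
            have hca' : 1 ≤ aN α σ v.val := hca
            omega
          have hMu : M u.val := (hMneg hnca _).2 (le_of_eq hx)
          have hMu1 : ¬ M (u.val + 1) := by
            rw [hMneg hnca]
            have h1 := hτne u.val u.isLt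
            rw [hx] at h1
            omega
          refine ⟨u.val, ?_, u.isLt, hMu, hMu1, Or.inl ⟨rfl, Or.inl hx⟩⟩
          simp only [hφ]
          rw [if_neg hne, if_pos hx, if_neg hbl, if_neg hbr]
    · have hτlt : tauN α σ u.val < j := lt_of_le_of_ne hτu hx
      by_cases hbl : 0 < u.val ∧ t ≤ rhoN α σ (u.val-1)
      · left
        refine ⟨u.val, ?_, ?_, Or.inr ⟨rfl, hbl⟩⟩
        · simp only [hφ]
          rw [if_neg hne, if_neg hx, if_pos hbl]
        · rw [hLS1]
          refine Finset.mem_filter.2 ⟨Finset.mem_range.2 u.isLt, hτlt, Or.inr ?_⟩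
          have := hρτ (u.val-1) (by omega) hbl.2
          omega
      · right
        obtain ⟨h1n, h1ρ⟩ := hact u hu hne hτlt hbl
        have hτ1 : j ≤ tauN α σ (u.val+1) := hρτ _ h1n h1ρ
        have hMu : M u.val := by
          by_cases hca : cA
          · exact (hMpos hca _).2 hτlt
          · exact (hMneg hca _).2 (by omega)
        have hMu1 : ¬ M (u.val+1) := by
          by_cases hca : cA
          · rw [hMpos hca]
            omega
          · rw [hMneg hca]
            intro hcon
            have hx1 : tauN α σ (u.val+1) = j := by omega
            have h2 := hxa' (u.val+1) h1n h1ρ hx1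
            have h3 : ¬ 1 ≤ aN α σ v.val := hca
            have h4 : 1 ≤ aN α σ (u.val+1) := by
              simp only [aN, Nat.add_sub_cancel]
              rw [if_pos ⟨by omega, by omega⟩]
              omega
            omega
        refine ⟨u.val, ?_, u.isLt, hMu, hMu1, Or.inl ⟨rfl, Or.inr h1ρ⟩⟩
        simp only [hφ]
        rw [if_neg hne, if_neg hx, if_neg hbl]
  have hφv : φ v = 2*α.length+2 := by
    simp only [hφ, if_pos rfl]
  have hq_lt : ∀ q ∈ LS1, q < α.length := by
    intro q hq
    rw [hLS1] at hq
    exact Finset.mem_range.1 (Finset.mem_filter.1 hq).1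
  have hmapsto : ∀ u ∈ bagB α σ t, φ u ∈ T := by
    intro u hu
    by_cases hne : u = v
    · subst hne
      rw [hφv, hT]
      exact Finset.mem_union_right _ (Finset.mem_singleton_self _)
    · rcases hspec u hu hne with ⟨q, hq, hqLS, -⟩ | ⟨r, hq, hrn, hMr, -, -⟩
      · rw [hq, hT]
        exact Finset.mem_union_left _ (Finset.mem_union_left _
          (Finset.mem_image.2 ⟨q, hqLS, rfl⟩))
      · rw [hq, hT]
        exact Finset.mem_union_left _ (Finset.mem_union_right _
          (Finset.mem_image.2 ⟨leftE M r, hℓLS r hrn hMr, rfl⟩))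
  have hinj : Set.InjOn φ (bagB α σ t : Finset (Fin α.length)) := by
    intro u₁ h₁' u₂ h₂' heq
    have h₁ : u₁ ∈ bagB α σ t := h₁'
    have h₂ : u₂ ∈ bagB α σ t := h₂'
    by_cases e1 : u₁ = v
    · by_cases e2 : u₂ = v
      · rw [e1, e2]
      · exfalso
        rw [e1, hφv] at heq
        rcases hspec u₂ h₂ e2 with ⟨q, hq, hqLS, -⟩ | ⟨r, hq, -, -, -, -⟩
        · have := hq_lt q hqLS
          rw [hq] at heq
          omega
        · rw [hq] at heq
          omega
    · by_cases e2 : u₂ = v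
      · exfalso
        rw [e2, hφv] at heq
        rcases hspec u₁ h₁ e1 with ⟨q, hq, hqLS, -⟩ | ⟨r, hq, -, -, -, -⟩
        · have := hq_lt q hqLS
          rw [hq] at heq
          omega
        · rw [hq] at heq
          omega
      · rcases hspec u₁ h₁ e1 with ⟨q₁, hq₁, hLSq₁, hs₁⟩ | ⟨r₁, hq₁, hr₁n, hM₁, hM₁', hs₁⟩ <;>
          rcases hspec u₂ h₂ e2 with ⟨q₂, hq₂, hLSq₂, hs₂⟩ | ⟨r₂, hq₂, hr₂n, hM₂, hM₂', hs₂⟩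
        · -- even / even
          have hqq : q₁ = q₂ := by
            rw [hq₁, hq₂] at heq
            omega
          rcases hs₁ with ⟨e₁', hτ₁⟩ | ⟨e₁', hpos₁, hρ₁⟩ <;>
            rcases hs₂ with ⟨e₂', hτ₂⟩ | ⟨e₂', hpos₂, hρ₂⟩
          · exact Fin.ext (by omega)
          · exfalso
            have h5 : u₂.val - 1 = u₁.val := by omega
            rw [h5] at hρ₂
            have := hlt u₁ h₁ e1
            omega
          · exfalso
            have h5 : u₁.val - 1 = u₂.val := by omega
            rw [h5] at hρ₁
            have := hlt u₂ h₂ e2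
            omega
          · exact Fin.ext (by omega)
        · exfalso
          rw [hq₁, hq₂] at heq
          omega
        · exfalso
          rw [hq₁, hq₂] at heq
          omega
        · -- odd / odd
          have hℓeq : leftE M r₁ = leftE M r₂ := by
            rw [hq₁, hq₂] at heq
            omega
          have hrr : r₁ = r₂ := leftE_inj M r₁ r₂ hM₁ hM₂ hM₁' hM₂' hℓeq
          rcases hs₁ with ⟨e₁', hex₁⟩ | ⟨e₁', hca₁⟩ <;>
            rcases hs₂ with ⟨e₂', hex₂⟩ | ⟨e₂', hca₂⟩
          · exact Fin.ext (by omega)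
          · exfalso
            rcases hex₁ with hτ₁ | hρ₁
            · have hMu₁ : M u₁.val := by rw [← e₁']; exact hM₁
              have := (hMpos hca₂ u₁.val).1 hMu₁
              omega
            · have h5 : u₁.val + 1 = u₂.val := by omega
              rw [h5] at hρ₁
              have := hlt u₂ h₂ e2
              omega
          · exfalso
            rcases hex₂ with hτ₂ | hρ₂
            · have hMu₂ : M u₂.val := by rw [← e₂']; exact hM₂
              have := (hMpos hca₁ u₂.val).1 hMu₂
              omega
            · have h5 : u₂.val + 1 = u₁.val := by omega
              rw [h5] at hρ₂
              have := hlt u₁ h₁ e1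
              omega
          · exact Fin.ext (by omega)
  have hcount : (bagB α σ t).card ≤ T.card :=
    Finset.card_le_card_of_injOn φ hmapsto hinj
  have hTcard : T.card ≤ 2 * markingNumber α σ + 1 := by
    rw [hT]
    have c1 : ((LS1.image (fun q => 2*q) ∪ LSM.image (fun q => 2*q+1)) ∪ ({2*α.length+2} : Finset ℕ)).card
        ≤ (LS1.image (fun q => 2*q) ∪ LSM.image (fun q => 2*q+1)).card + 1 := by
      have := Finset.card_union_le (LS1.image (fun q => 2*q) ∪ LSM.image (fun q => 2*q+1))
        ({2*α.length+2} : Finset ℕ)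
      simpa using this
    have c2 : (LS1.image (fun q => 2*q) ∪ LSM.image (fun q => 2*q+1)).card
        ≤ LS1.card + LSM.card := by
      have h6 := Finset.card_union_le (LS1.image (fun q => 2*q)) (LSM.image (fun q => 2*q+1))
      have h7 := Finset.card_image_le (s := LS1) (f := fun q => 2*q)
      have h8 := Finset.card_image_le (s := LSM) (f := fun q => 2*q+1)
      omega
    omega
  calc (bagB α σ (rhoN α σ v.val)).card = (bagB α σ t).card := by rw [ht]
    _ ≤ T.card := hcount
    _ ≤ 2 * markingNumber α σ + 1 := hTcard

end PWAux
namespace PWAux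
open Finset

variable (α σ : List X)

lemma card_bag_le (hms : IsMarkingSeq α σ) (hcond : α.Chain' (· ≠ ·)) (t : ℕ) :
    (bagB α σ t).card ≤ 2 * markingNumber α σ + 1 := by
  classical
  by_cases hex : ∃ w : Fin α.length, t ≤ rhoN α σ w.val
  · set S := Finset.univ.filter (fun w : Fin α.length => t ≤ rhoN α σ w.val) with hS
    have hSne : S.Nonempty := by
      obtain ⟨w, hw⟩ := hex
      exact ⟨w, Finset.mem_filter.2 ⟨Finset.mem_univ _, hw⟩⟩
    obtain ⟨v, hvS, hvmin⟩ := Finset.exists_min_image S (fun w => rhoN α σ w.val) hSne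
    have hvt : t ≤ rhoN α σ v.val := (Finset.mem_filter.1 hvS).2
    have hsub : bagB α σ t ⊆ bagB α σ (rhoN α σ v.val) := by
      intro u hu
      obtain ⟨-, h1, h2⟩ := Finset.mem_filter.1 hu
      refine Finset.mem_filter.2 ⟨Finset.mem_univ _, le_trans h1 hvt, ?_⟩
      rcases h2 with h2 | ⟨w, hadj, hw⟩
      · left
        have huS : u ∈ S := Finset.mem_filter.2 ⟨Finset.mem_univ _, le_of_eq h2.symm⟩
        have := hvmin u huS
        omega
      · exact Or.inr ⟨w, hadj, hvmin w (Finset.mem_filter.2 ⟨Finset.mem_univ _, hw⟩)⟩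
    exact le_trans (Finset.card_le_card hsub) (card_bag_rho_le α σ hms hcond v)
  · have hempty : bagB α σ t = ∅ := by
      rw [Finset.eq_empty_iff_forall_notMem]
      intro u hu
      obtain ⟨-, h1, h2⟩ := Finset.mem_filter.1 hu
      push_neg at hex
      rcases h2 with h2 | ⟨w, -, hw⟩
      · exact absurd (le_of_eq h2.symm) (not_le.2 (hex u))
      · exact absurd hw (not_le.2 (hex w))
    rw [hempty]
    simp

end PWAux

/-- For every condensed word `α`, `pathwidth(G_α) ≤ 2 · loc(α)`. -/
theorem pathwidth_le_two_mul_locality (α : List X) (hcond : α.Chain' (· ≠ ·)) :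
    pathwidth (wordGraph α) ≤ 2 * locality α := by
  classical
  have hne : ({n | ∃ σ, IsMarkingSeq α σ ∧ markingNumber α σ = n} : Set ℕ).Nonempty :=
    ⟨markingNumber α α.dedup, α.dedup,
      ⟨α.nodup_dedup, by ext x; simp [List.mem_dedup]⟩, rfl⟩
  obtain ⟨σ, hms, hloc⟩ := Nat.sInf_mem hne
  rw [locality, ← hloc, pathwidth]
  apply Nat.sInf_le
  exact ⟨3*α.length*(σ.length+1)+3*α.length, PWAux.bagB α σ,
    PWAux.isPathDecomp_bagB α σ, fun t => PWAux.card_bag_le α σ hms hcond t⟩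
end
end

section
/- For every condensed word α with |α| ≥ 2, loc(α) ≤ pathwidth(G_α), where G_α is the graph on positions of α with edges between consecutive positions and between all pairs of positions carrying the same letter. -/
noncomputable section

attribute [local instance] Classical.propDecidable

variable {X : Type*} [DecidableEq X]

/- ------------ auxiliary list lemmas --------------- -/

lemma blocksAux_append_s8 (a b : List Bool) (prev : Bool) :
    blocksAux prev (a ++ b) = blocksAux prev a + blocksAux (a.getLastD prev) b := by
  induction a generalizing prev with
  | nil => simp [blocksAux]
  | cons x xs ih =>
      show (if x = true ∧ prev = false then 1 else 0) + blocksAux x (xs ++ b) = _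
      rw [ih, List.getLastD_cons]
      show _ = (if x = true ∧ prev = false then 1 else 0) + blocksAux x xs + blocksAux (xs.getLastD x) b
      omega

lemma blocksAux_false_cons (t : List Bool) (prev : Bool) :
    blocksAux prev (false :: t) = blocksAux false t := by
  simp [blocksAux]

lemma blocksAux_allFalse (l : List Bool) (h : ∀ b ∈ l, b = false) (prev : Bool) :
    blocksAux prev l = 0 := by
  induction l generalizing prev with
  | nil => rfl
  | cons x xs ih =>
      have hx : x = false := h x (by simp)
      subst hx
      simp [blocksAux, ih (fun b hb => h b (by simp [hb]))]

lemma blocksAux_allTrue_true (l : List Bool) (h : ∀ b ∈ l, b = true) :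
    blocksAux true l = 0 := by
  induction l with
  | nil => rfl
  | cons x xs ih =>
      have hx : x = true := h x (by simp)
      subst hx
      simp [blocksAux, ih (fun b hb => h b (by simp [hb]))]

lemma blocksAux_allTrue (l : List Bool) (h : ∀ b ∈ l, b = true) (hne : l ≠ []) :
    blocksAux false l = 1 := by
  cases l with
  | nil => exact absurd rfl hne
  | cons x xs =>
      have hx : x = true := h x (by simp)
      subst hx
      simp [blocksAux, blocksAux_allTrue_true xs (fun b hb => h b (by simp [hb]))]

lemma blocksAux_false_eq (l : List Bool) :
    blocksAux false l = (if l.headD false = true then 1 else 0) + blocksAux true l := by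
  cases l with
  | nil => rfl
  | cons x xs => cases x <;> simp [blocksAux]

lemma blocksAux_ends (l : List Bool) :
    blocksAux false l = ∑ p ∈ Finset.range l.length,
      (if l.getD p false = true ∧ l.getD (p+1) false = false then 1 else 0) := by
  induction l with
  | nil => rfl
  | cons x xs ih =>
      simp only [List.length_cons]
      rw [Finset.sum_range_succ']
      have hshift : ∀ p : ℕ,
          (if (x :: xs).getD (p+1) false = true ∧ (x :: xs).getD (p+2) false = false
            then 1 else 0)
          = (if xs.getD p false = true ∧ xs.getD (p+1) false = false then 1 else 0) := by
        intro p; rfl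
      simp only [hshift]
      rw [← ih]
      cases x with
      | false => simp [blocksAux]
      | true =>
          simp only [blocksAux, List.getD_cons_zero, List.getD_cons_succ]
          rw [blocksAux_false_eq xs]
          cases hxs : xs with
          | nil => simp; omega
          | cons y ys => cases y <;> (simp [List.headD]; try omega)

lemma blocksAux_starts (l : List Bool) (prev : Bool) :
    blocksAux prev l = ∑ p ∈ Finset.range l.length,
      (if l.getD p false = true ∧ (if p = 0 then prev else l.getD (p-1) false) = false
        then 1 else 0) := by
  induction l generalizing prev with
  | nil => rfl
  | cons x xs ih =>
      simp only [List.length_cons]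
      rw [Finset.sum_range_succ']
      have hshift : ∀ p : ℕ,
          (if (x :: xs).getD (p+1) false = true ∧
              (if p+1 = 0 then prev else (x :: xs).getD (p+1-1) false) = false then 1 else 0)
          = (if xs.getD p false = true ∧ (if p = 0 then x else xs.getD (p-1) false) = false
              then 1 else 0) := by
        intro p
        cases p with
        | zero => rfl
        | succ q => rfl
      simp only [hshift]
      rw [← ih x]
      show blocksAux prev (x :: xs) = blocksAux x xs + _
      simp only [blocksAux, List.getD_cons_zero, if_true, eq_self_iff_true]
      omega


/-- For every condensed word `α` with `|α| ≥ 2`, `loc(α) ≤ pathwidth(G_α)`. -/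
theorem locality_le_pathwidth (α : List X) (hcond : α.Chain' (· ≠ ·))
    (hlen : 2 ≤ α.length) :
    locality α ≤ pathwidth (wordGraph α) := by
  classical
  have hn0 : 0 < α.length := by omega
  -- the pathwidth set is nonempty
  have hPWne : {w | ∃ m B, IsPathDecomp (wordGraph α) m B ∧ ∀ t, (B t).card ≤ w + 1}.Nonempty := by
    refine ⟨α.length, 0, fun t => if t = 0 then Finset.univ else ∅, ⟨?_, ?_⟩, ?_⟩
    · intro u v _
      exact ⟨0, le_refl 0, by simp, by simp⟩
    · intro v
      refine ⟨0, 0, le_refl 0, le_refl 0, fun t => ?_⟩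
      by_cases ht : t = 0 <;> simp [ht]
    · intro t
      by_cases ht : t = 0 <;> simp [ht]
  have hkmem : ∃ m B, IsPathDecomp (wordGraph α) m B ∧
      ∀ t, (B t).card ≤ pathwidth (wordGraph α) + 1 := Nat.sInf_mem hPWne
  obtain ⟨m, B, hdec, hcard⟩ := hkmem
  set k := pathwidth (wordGraph α) with hk
  -- interval representation
  have hIv := hdec.2
  choose s e hse hsm hmem using hIv
  -- adjacency helper
  have hadj : ∀ v w : Fin α.length, v ≠ w →
      (v.val + 1 = w.val ∨ w.val + 1 = v.val ∨ α.get v = α.get w) →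
      ∃ t : ℕ, v ∈ B t ∧ w ∈ B t := by
    intro v w hne hrel
    have hadj' : (wordGraph α).Adj v w := by
      rw [wordGraph, SimpleGraph.fromRel_adj]
      refine ⟨hne, ?_⟩
      rcases hrel with h | h | h
      · exact Or.inl (Or.inl h)
      · exact Or.inr (Or.inl h)
      · exact Or.inl (Or.inr h)
    obtain ⟨t, _, h1, h2⟩ := hdec.1 v w hadj'
    exact ⟨t, h1, h2⟩
  have hcross : ∀ v w : Fin α.length, v ≠ w →
      (v.val + 1 = w.val ∨ w.val + 1 = v.val ∨ α.get v = α.get w) →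
      s w ≤ e v := by
    intro v w hne hrel
    obtain ⟨t, h1, h2⟩ := hadj v w hne hrel
    have hv := (hmem v t).mp h1
    have hw := (hmem w t).mp h2
    omega
  -- keys
  have key_lt : ∀ v w : Fin α.length, s v < s w → (s v) * α.length + v.val < (s w) * α.length + w.val := by
    intro v w h
    have hv : v.val < α.length := v.isLt
    have := Nat.mul_le_mul_right α.length (Nat.succ_le_of_lt h)
    have h2 : (s v) * α.length + α.length ≤ (s w) * α.length := by
      calc (s v) * α.length + α.length = (s v + 1) * α.length := by ring
      _ ≤ (s w) * α.length := this
    omega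
  set key : Fin α.length → ℕ := fun v => (s v) * α.length + v.val with hkey
  have keymono : ∀ v w : Fin α.length, key v ≤ key w → s v ≤ s w := by
    intro v w h
    by_contra hc
    push_neg at hc
    have := key_lt w v hc
    simp only [hkey] at h
    omega
  have keyinj : ∀ v w : Fin α.length, key v = key w → v = w := by
    intro v w h
    have h1 : key v % α.length = v.val := by
      show ((s v) * α.length + v.val) % α.length = v.val
      rw [Nat.mul_comm, Nat.mul_add_mod]
      exact Nat.mod_eq_of_lt v.isLt
    have h2 : key w % α.length = w.val := by
      show ((s w) * α.length + w.val) % α.length = w.val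
      rw [Nat.mul_comm, Nat.mul_add_mod]
      exact Nat.mod_eq_of_lt w.isLt
    apply Fin.ext
    rw [← h1, ← h2, h]
  -- letter keys
  set K : X → ℕ := fun x => Finset.sup (Finset.univ.filter fun v : Fin α.length => α.get v = x) key
    with hKdef
  have hKocc : ∀ v : Fin α.length, key v ≤ K (α.get v) := by
    intro v
    exact Finset.le_sup (by simp)
  have hKatt : ∀ x ∈ α, ∃ v : Fin α.length, α.get v = x ∧ key v = K x := by
    intro x hx
    obtain ⟨idx, hidx⟩ := List.mem_iff_get.mp hx
    have hne : (Finset.univ.filter fun v : Fin α.length => α.get v = x).Nonempty :=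
      ⟨idx, by simp only [Finset.mem_filter, Finset.mem_univ, true_and]; simpa using hidx⟩
    obtain ⟨v, hv, hveq⟩ := Finset.exists_mem_eq_sup _ hne key
    simp only [Finset.mem_filter] at hv
    exact ⟨v, hv.2, hveq.symm⟩
  -- the marking sequence
  set r : X → X → Prop := fun a b => K a ≤ K b with hr
  haveI : IsTotal X r := ⟨fun a b => le_total (K a) (K b)⟩
  haveI : IsTrans X r := ⟨fun a b c h1 h2 => le_trans h1 h2⟩
  set σ : List X := List.insertionSort r α.dedup with hσ
  have hperm : σ.Perm α.dedup := List.perm_insertionSort r α.dedup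
  have hnodup : σ.Nodup := (hperm.nodup_iff).mpr (List.nodup_dedup α)
  have hmemσ : ∀ x, x ∈ σ ↔ x ∈ α := by
    intro x
    rw [hperm.mem_iff, List.mem_dedup]
  have htf : σ.toFinset = α.toFinset := by
    apply Finset.ext
    intro x
    simp only [List.mem_toFinset]
    exact hmemσ x
  have hsorted : σ.Pairwise r := List.pairwise_insertionSort r α.dedup
  -- k ≥ 1
  have hk1 : 1 ≤ k := by
    have h0 : (0:ℕ) < α.length := by omega
    have h1 : (1:ℕ) < α.length := by omega
    set v0 : Fin α.length := ⟨0, h0⟩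
    set v1 : Fin α.length := ⟨1, h1⟩
    have hne : v0 ≠ v1 := by
      intro h
      have := congrArg Fin.val h
      simp [v0, v1] at this
    obtain ⟨t, ht0, ht1⟩ := hadj v0 v1 hne (Or.inl rfl)
    have hsub : ({v0, v1} : Finset (Fin α.length)) ⊆ B t := by
      intro x hx
      simp only [Finset.mem_insert, Finset.mem_singleton] at hx
      rcases hx with h | h <;> subst h <;> assumption
    have hc2 : ({v0, v1} : Finset (Fin α.length)).card = 2 := by
      rw [Finset.card_insert_of_notMem (by simp [hne]), Finset.card_singleton]
    have := Finset.card_le_card hsub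
    have := hcard t
    omega
  -- per-stage bound
  have hstage : ∀ i, blockCount α (σ.take i) ≤ k := by
    intro i
    set S : List X := σ.take i with hS
    set l : List Bool := α.map (fun x => decide (x ∈ S)) with hldef
    have hllen : l.length = α.length := by simp [hldef]
    have hlget : ∀ (p : ℕ) (hp : p < α.length), l.getD p false = decide (α.get ⟨p, hp⟩ ∈ S) := by
      intro p hp
      have hp' : p < l.length := by omega
      rw [List.getD_eq_getElem l false hp']
      simp [hldef, List.get_eq_getElem]
    show blocksAux false l ≤ k
    by_cases hall : ∀ v : Fin α.length, α.get v ∈ S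
    · -- all marked
      have : blocksAux false l = 1 := by
        apply blocksAux_allTrue
        · intro b hb
          simp only [hldef, List.mem_map] at hb
          obtain ⟨x, hx, hbx⟩ := hb
          obtain ⟨idx, hidx⟩ := List.mem_iff_get.mp hx
          rw [← hbx]
          have := hall idx
          rw [hidx] at this
          simp [this]
        · intro hnil
          rw [hnil] at hllen
          simp at hllen
          omega
      omega
    · push_neg at hall
      obtain ⟨v₀, hv₀⟩ := hall
      by_cases hexm : ∃ v : Fin α.length, α.get v ∈ S
      · -- both marked and unmarked positions exist
        obtain ⟨vm, hvm⟩ := hexm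
        have hSfne : S.toFinset.Nonempty := ⟨α.get vm, List.mem_toFinset.mpr hvm⟩
        set KS : ℕ := S.toFinset.sup K with hKS
        have f1 : ∀ v : Fin α.length, α.get v ∈ S → key v ≤ KS :=
          fun v hv => le_trans (hKocc v) (Finset.le_sup (List.mem_toFinset.mpr hv))
        have f2 : ∀ v : Fin α.length, α.get v ∉ S → KS < K (α.get v) := by
          intro v hv
          have hyα : α.get v ∈ α := α.get_mem _
          have hyσ : α.get v ∈ σ := (hmemσ _).mpr hyα
          have hydrop : α.get v ∈ σ.drop i := by
            have := (List.take_append_drop i σ) ▸ hyσ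
            rcases List.mem_append.mp this with h | h
            · exact absurd h hv
            · exact h
          have hpair : ∀ x ∈ S, K x ≤ K (α.get v) := by
            have hs : List.Pairwise r σ := hsorted
            rw [← List.take_append_drop i σ] at hs
            have := (List.pairwise_append.mp hs).2.2
            intro x hx
            exact this x hx _ hydrop
          have hle : KS ≤ K (α.get v) := Finset.sup_le fun x hx =>
            hpair x (List.mem_toFinset.mp hx)
          rcases lt_or_eq_of_le hle with h | h
          · exact h
          · exfalso
            obtain ⟨x, hxS, hxK⟩ := Finset.exists_mem_eq_sup S.toFinset hSfne K
            have hxS' : x ∈ S := List.mem_toFinset.mp hxS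
            have hxα : x ∈ α := by
              have : x ∈ σ := List.mem_of_mem_take hxS'
              exact (hmemσ _).mp this
            obtain ⟨vy, hvy1, hvy2⟩ := hKatt (α.get v) hyα
            obtain ⟨vx, hvx1, hvx2⟩ := hKatt x hxα
            have hkk : key vy = key vx := by
              rw [hvy2, hvx2, ← h]
              exact hxK
            have heq := keyinj _ _ hkk
            subst heq
            rw [hvy1] at hvx1
            exact hv (hvx1 ▸ hxS')
        -- the minimal outside vertex
        set OutP : Finset (Fin α.length) := Finset.univ.filter (fun v => KS < key v) with hOutP
        have hOutne : OutP.Nonempty := by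
          obtain ⟨w, hw1, hw2⟩ := hKatt (α.get v₀) (α.get_mem _)
          refine ⟨w, ?_⟩
          simp only [hOutP, Finset.mem_filter, Finset.mem_univ, true_and]
          rw [hw2]
          exact f2 v₀ hv₀
        obtain ⟨wst, hwstmem, hwstmin⟩ := Finset.exists_min_image OutP key hOutne
        have hKSw : KS < key wst := by
          simpa [hOutP] using hwstmem
        set θ : ℕ := s wst with hθ
        have g1 : ∀ v : Fin α.length, key v ≤ KS → s v ≤ θ := by
          intro v hv
          exact keymono v wst (by omega)
        have g2 : ∀ w : Fin α.length, KS < key w → θ ≤ s w := by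
          intro w hw
          refine keymono wst w ?_
          exact hwstmin w (by simp [hOutP, hw])
        have g3 : α.get wst ∉ S := by
          intro hc
          exact absurd (f1 wst hc) (by omega)
        have g4 : wst ∈ B θ := (hmem wst θ).mpr ⟨le_refl _, hse wst⟩
        -- membership lemmas
        have hunm : ∀ v : Fin α.length, α.get v ∉ S → key v ≤ KS → v ∈ B θ := by
          intro v hv hkv
          obtain ⟨w, hw1, hw2⟩ := hKatt (α.get v) (α.get_mem _)
          have hKw : KS < key w := by rw [hw2]; exact f2 v hv
          have hne : v ≠ w := by
            intro h; subst h; omega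
          have hecross : s w ≤ e v := hcross v w hne (Or.inr (Or.inr hw1.symm))
          have := g2 w hKw
          exact (hmem v θ).mpr ⟨g1 v hkv, by omega⟩
        have hmkd : ∀ v w : Fin α.length, α.get v ∈ S →
            (v.val + 1 = w.val ∨ w.val + 1 = v.val) → KS < key w → v ∈ B θ := by
          intro v w hv hrel hKw
          have hne : v ≠ w := by
            intro h; subst h
            rcases hrel with h | h <;> omega
          have hecross : s w ≤ e v := hcross v w hne (by tauto)
          have := g2 w hKw
          exact (hmem v θ).mpr ⟨g1 v (f1 v hv), by omega⟩
        -- ====== counting ======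
        set q₀ : ℕ := wst.val with hq₀
        have hq0n : q₀ < α.length := wst.isLt
        have hwstfin : ∀ (h : q₀ < α.length), (⟨q₀, h⟩ : Fin α.length) = wst := by
          intro h; apply Fin.ext; rfl
        -- the boolean marking function on ℕ
        set mk : ℕ → Bool := fun p => l.getD p false with hmkdef
        have hlmk : ∀ p : ℕ, l.getD p false = mk p := fun p => rfl
        have hmk_lt : ∀ (p : ℕ) (h : p < α.length), mk p = decide (α.get ⟨p, h⟩ ∈ S) := by
          intro p h
          rw [← hlmk p, hlget p h]
        have hmk_ge : ∀ p : ℕ, α.length ≤ p → mk p = false := by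
          intro p h
          rw [← hlmk p]
          exact List.getD_eq_default _ _ (by omega)
        have hmkq0 : mk q₀ = false := by
          rw [hmk_lt q₀ hq0n]
          simp only [decide_eq_false_iff_not]
          rw [hwstfin hq0n]
          exact g3
        -- split the list at q₀
        set l₁ : List Bool := l.take q₀ with hl₁
        set l₂ : List Bool := l.drop (q₀+1) with hl₂
        have hl1len : l₁.length = q₀ := by
          simp only [hl₁, List.length_take]
          omega
        have hl2len : l₂.length = α.length - (q₀+1) := by
          simp only [hl₂, List.length_drop]
          omega
        have hq0l : q₀ < l.length := by omega
        have hsplit : l = l₁ ++ false :: l₂ := by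
          have hgq : l[q₀] = false := by
            rw [← List.getD_eq_getElem l false hq0l, hlmk]
            exact hmkq0
          conv_lhs => rw [← List.take_append_drop q₀ l]
          rw [List.drop_eq_getElem_cons hq0l, hgq]
        have hcount : blocksAux false l = blocksAux false l₁ + blocksAux false l₂ := by
          rw [hsplit, blocksAux_append_s8, blocksAux_false_cons]
        -- getD of the two pieces
        have hl1get : ∀ p : ℕ, p < q₀ → l₁.getD p false = mk p := by
          intro p hp
          have hp' : p < l₁.length := by omega
          rw [List.getD_eq_getElem _ _ hp']
          simp only [hl₁, List.getElem_take]
          rw [← List.getD_eq_getElem l false (by omega), hlmk]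
        have hl2get : ∀ p : ℕ, l₂.getD p false = mk (q₀+1+p) := by
          intro p
          by_cases hp : p < l₂.length
          · rw [List.getD_eq_getElem _ _ hp]
            simp only [hl₂, List.getElem_drop]
            rw [← List.getD_eq_getElem l false (by simp only [hl₂, List.length_drop] at hp; omega),
              hlmk]
          · rw [List.getD_eq_default _ _ (by omega), hmk_ge _ (by omega)]
        -- counts as filter cards
        set C₁ : Finset ℕ := (Finset.range q₀).filter (fun p => mk p = true ∧ mk (p+1) = false)
          with hC₁
        set C₂ : Finset ℕ := (Finset.range (α.length - (q₀+1))).filter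
          (fun p => mk (q₀+1+p) = true ∧ mk (q₀+p) = false) with hC₂
        have hr1 : blocksAux false l₁ = C₁.card := by
          rw [blocksAux_ends l₁, hC₁, Finset.card_filter, hl1len]
          apply Finset.sum_congr rfl
          intro p hp
          have hp' : p < q₀ := Finset.mem_range.mp hp
          congr 1
          rw [hl1get p hp']
          by_cases h2 : p + 1 < q₀
          · rw [hl1get (p+1) h2]
          · have : l₁.getD (p+1) false = false := List.getD_eq_default _ _ (by omega)
            rw [this]
            have hq : p + 1 = q₀ := by omega
            rw [hq, hmkq0]
        have hr2 : blocksAux false l₂ = C₂.card := by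
          rw [blocksAux_starts l₂ false, hC₂, Finset.card_filter, hl2len]
          apply Finset.sum_congr rfl
          intro p hp
          congr 1
          rw [hl2get p]
          cases p with
          | zero =>
              simp only [if_pos rfl]
              have : mk (q₀ + 0) = false := by simpa using hmkq0
              simp [this, hmkq0]
          | succ q =>
              have : ¬ (q + 1 = 0) := by omega
              rw [if_neg this]
              have hss : q + 1 - 1 = q := rfl
              rw [hss, hl2get q]
              have hsd : q₀ + 1 + q = q₀ + (q+1) := by omega
              rw [hsd]
        -- representative functions
        set φ₁ : ℕ → Fin α.length := fun p =>
          if h' : p < α.length then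
            (if h : p + 1 < α.length then
              (if key ⟨p+1, h⟩ ≤ KS then (⟨p+1, h⟩ : Fin α.length) else ⟨p, h'⟩)
            else ⟨p, h'⟩)
          else wst with hφ₁
        set φ₂ : ℕ → Fin α.length := fun p =>
          if h : q₀ + p < α.length then
            (if key ⟨q₀+p, h⟩ ≤ KS then (⟨q₀+p, h⟩ : Fin α.length)
             else if h' : q₀+1+p < α.length then ⟨q₀+1+p, h'⟩ else wst)
          else wst with hφ₂
        -- properties of φ₁ on C₁
        have hφ₁spec : ∀ p ∈ C₁, φ₁ p ∈ B θ ∧ ((φ₁ p).val = p ∨ (φ₁ p).val = p + 1) ∧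
            (φ₁ p).val < q₀ := by
          intro p hp
          simp only [hC₁, Finset.mem_filter, Finset.mem_range] at hp
          obtain ⟨hpq, hmkp, hmkp1⟩ := hp
          have hpn : p < α.length := by omega
          have hp1n : p + 1 < α.length := by omega
          have hmarked : α.get ⟨p, hpn⟩ ∈ S := by
            have := hmk_lt p hpn
            rw [hmkp] at this
            simpa using this.symm
          have hunmarked : α.get ⟨p+1, hp1n⟩ ∉ S := by
            have := hmk_lt (p+1) hp1n
            rw [hmkp1] at this
            simpa using this.symm
          have hφval : φ₁ p = (if key ⟨p+1, hp1n⟩ ≤ KS then (⟨p+1, hp1n⟩ : Fin α.length)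
              else ⟨p, hpn⟩) := by
            simp only [hφ₁, dif_pos hpn, dif_pos hp1n]
          by_cases hc : key ⟨p+1, hp1n⟩ ≤ KS
          · rw [hφval, if_pos hc]
            have hne : p + 1 ≠ q₀ := by
              intro hq
              have : (⟨p+1, hp1n⟩ : Fin α.length) = wst := by
                apply Fin.ext; simpa using hq
              rw [this] at hc
              omega
            exact ⟨hunm _ hunmarked hc, Or.inr rfl, by show p + 1 < q₀; omega⟩
          · rw [hφval, if_neg hc]
            refine ⟨hmkd ⟨p, hpn⟩ ⟨p+1, hp1n⟩ hmarked (Or.inl rfl) (by omega), Or.inl rfl,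
              by show p < q₀; omega⟩
        -- properties of φ₂ on C₂
        have hφ₂spec : ∀ p ∈ C₂, φ₂ p ∈ B θ ∧
            ((φ₂ p).val = q₀ + p ∨ (φ₂ p).val = q₀ + 1 + p) ∧ q₀ < (φ₂ p).val := by
          intro p hp
          simp only [hC₂, Finset.mem_filter, Finset.mem_range] at hp
          obtain ⟨hpq, hmkp1, hmkp⟩ := hp
          have hgn : q₀ + p < α.length := by omega
          have hg1n : q₀ + 1 + p < α.length := by omega
          have hmarked : α.get ⟨q₀+1+p, hg1n⟩ ∈ S := by
            have := hmk_lt (q₀+1+p) hg1n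
            rw [hmkp1] at this
            simpa using this.symm
          have hunmarked : α.get ⟨q₀+p, hgn⟩ ∉ S := by
            have := hmk_lt (q₀+p) hgn
            rw [hmkp] at this
            simpa using this.symm
          have hφval : φ₂ p = (if key ⟨q₀+p, hgn⟩ ≤ KS then (⟨q₀+p, hgn⟩ : Fin α.length)
              else ⟨q₀+1+p, hg1n⟩) := by
            simp only [hφ₂, dif_pos hgn, dif_pos hg1n]
          by_cases hc : key ⟨q₀+p, hgn⟩ ≤ KS
          · rw [hφval, if_pos hc]
            have hne : q₀ + p ≠ q₀ := by
              intro hq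
              have : (⟨q₀+p, hgn⟩ : Fin α.length) = wst := by
                apply Fin.ext; exact hq
              rw [this] at hc
              omega
            exact ⟨hunm _ hunmarked hc, Or.inl rfl, by show q₀ < q₀ + p; omega⟩
          · rw [hφval, if_neg hc]
            refine ⟨hmkd ⟨q₀+1+p, hg1n⟩ ⟨q₀+p, hgn⟩ hmarked
              (Or.inr (by show q₀ + p + 1 = q₀ + 1 + p; omega))
              (by omega), Or.inr rfl, by show q₀ < q₀ + 1 + p; omega⟩
        -- injectivity
        have hinj₁ : Set.InjOn φ₁ ↑C₁ := by
          intro p hp q hq hpq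
          rw [Finset.mem_coe] at hp hq
          have hp' : p ∈ C₁ := hp
          have hq' : q ∈ C₁ := hq
          simp only [hC₁, Finset.mem_filter, Finset.mem_range] at hp hq
          obtain ⟨-, hv1, -⟩ := hφ₁spec p hp'
          obtain ⟨-, hv2, -⟩ := hφ₁spec q hq'
          have hveq : (φ₁ p).val = (φ₁ q).val := by rw [hpq]
          by_contra hne
          -- wlog q = p + 1 and φ₁ p = p+1, φ₁ q = q
          rcases hv1 with h1 | h1 <;> rcases hv2 with h2 | h2 <;> rw [h1, h2] at hveq
          · omega
          · -- p = q + 1 : mk p true but mk (q+1) false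
            have hpq1 : p = q + 1 := by omega
            subst hpq1
            have hx := hp.2.1
            have hy := hq.2.2
            rw [hx] at hy
            simp at hy
          · have hqp1 : q = p + 1 := by omega
            subst hqp1
            have hx := hq.2.1
            have hy := hp.2.2
            rw [hx] at hy
            simp at hy
          · omega
        have hinj₂ : Set.InjOn φ₂ ↑C₂ := by
          intro p hp q hq hpq
          rw [Finset.mem_coe] at hp hq
          have hp' : p ∈ C₂ := hp
          have hq' : q ∈ C₂ := hq
          simp only [hC₂, Finset.mem_filter, Finset.mem_range] at hp hq
          obtain ⟨-, hv1, -⟩ := hφ₂spec p hp'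
          obtain ⟨-, hv2, -⟩ := hφ₂spec q hq'
          have hveq : (φ₂ p).val = (φ₂ q).val := by rw [hpq]
          by_contra hne
          rcases hv1 with h1 | h1 <;> rcases hv2 with h2 | h2 <;> rw [h1, h2] at hveq
          · omega
          · have : p = q + 1 := by omega
            subst this
            have hx := hp.2.2
            have hy := hq.2.1
            rw [show q₀ + (q+1) = q₀ + 1 + q by omega] at hx
            rw [hx] at hy
            simp at hy
          · have : q = p + 1 := by omega
            subst this
            have hx := hq.2.2
            have hy := hp.2.1
            rw [show q₀ + (p+1) = q₀ + 1 + p by omega] at hx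
            rw [hx] at hy
            simp at hy
          · omega
        -- assemble the big subset of B θ
        set A : Finset (Fin α.length) := insert wst ((C₁.image φ₁) ∪ (C₂.image φ₂)) with hA
        have hAsub : A ⊆ B θ := by
          intro v hv
          simp only [hA, Finset.mem_insert, Finset.mem_union, Finset.mem_image] at hv
          rcases hv with h | ⟨p, hp, hpv⟩ | ⟨p, hp, hpv⟩
          · rw [h]; exact g4
          · rw [← hpv]; exact (hφ₁spec p hp).1
          · rw [← hpv]; exact (hφ₂spec p hp).1
        have hdisj : Disjoint (C₁.image φ₁) (C₂.image φ₂) := by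
          rw [Finset.disjoint_left]
          intro v hv1 hv2
          simp only [Finset.mem_image] at hv1 hv2
          obtain ⟨p, hp, hpv⟩ := hv1
          obtain ⟨q, hq, hqv⟩ := hv2
          obtain ⟨-, -, h1⟩ := hφ₁spec p hp
          obtain ⟨-, -, h2⟩ := hφ₂spec q hq
          rw [hpv] at h1
          rw [hqv] at h2
          omega
        have hwstnot : wst ∉ (C₁.image φ₁) ∪ (C₂.image φ₂) := by
          intro hv
          simp only [Finset.mem_union, Finset.mem_image] at hv
          rcases hv with ⟨p, hp, hpv⟩ | ⟨p, hp, hpv⟩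
          · obtain ⟨-, -, h1⟩ := hφ₁spec p hp
            rw [hpv] at h1
            omega
          · obtain ⟨-, -, h1⟩ := hφ₂spec p hp
            rw [hpv] at h1
            omega
        have hAcard : A.card = 1 + C₁.card + C₂.card := by
          rw [hA, Finset.card_insert_of_notMem hwstnot, Finset.card_union_of_disjoint hdisj,
            Finset.card_image_of_injOn hinj₁, Finset.card_image_of_injOn hinj₂]
          omega
        have hfin : A.card ≤ k + 1 := le_trans (Finset.card_le_card hAsub) (hcard θ)
        rw [hcount, hr1, hr2]
        omega
      · -- no marked positions: block count is 0
        push_neg at hexm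
        have : blocksAux false l = 0 := by
          apply blocksAux_allFalse
          intro b hb
          simp only [hldef, List.mem_map] at hb
          obtain ⟨x, hx, hbx⟩ := hb
          obtain ⟨idx, hidx⟩ := List.mem_iff_get.mp hx
          rw [← hbx]
          have := hexm idx
          rw [hidx] at this
          simp [this]
        omega
  -- assemble
  have hms : IsMarkingSeq α σ := ⟨hnodup, htf⟩
  have hmn : markingNumber α σ ≤ k := by
    apply Finset.sup_le
    intro i _
    exact hstage i
  exact le_trans (Nat.sInf_le ⟨σ, hms, rfl⟩) hmn
end
end
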